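/- arXiv:2504.19671 — 2 statements merged into one kernel-verified Lean document; each statement's English description precedes it below -/
import Mathlib

section
/- For n ≥ 1, the total mutual-visibility number and the dual mutual-visibility number of the Sierpiński graph S_3^n are both 3. Moreover, {0^n, 1^n, 2^n} is the unique maximum total mutual-visibility set, and there are exactly 4 maximum dual mutual-visibility sets: {0^n,1^n,2^n} and the three sets {i^n, i^{n−1}j, i^{n−1}k} with {i,j,k} = {0,1,2}. -/
open SimpleGraph

/-- A walk is a shortest path: it is a path whose length equals the graph distance. -/
def IsShortest {V : Type*} (G : SimpleGraph V) {u v : V} (p : G.Walk u v) : Prop :=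
  p.IsPath ∧ p.length = G.dist u v

/-- `u` and `v` are `X`-visible: some shortest `u,v`-path meets `X` only in `{u,v}`. -/
def Visible {V : Type*} (G : SimpleGraph V) (X : Set V) (u v : V) : Prop :=
  ∃ p : G.Walk u v, IsShortest G p ∧ ∀ w ∈ p.support, w ∈ X → w = u ∨ w = v

/-- `u` and `v` are `X`-positionable: every shortest `u,v`-path meets `X` only in `{u,v}`. -/
def Positionable {V : Type*} (G : SimpleGraph V) (X : Set V) (u v : V) : Prop :=
  ∀ p : G.Walk u v, IsShortest G p → ∀ w ∈ p.support, w ∈ X → w = u ∨ w = v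

def MutualVisibilitySet {V : Type*} (G : SimpleGraph V) (X : Set V) : Prop :=
  ∀ u ∈ X, ∀ v ∈ X, Visible G X u v

def TotalMVSet {V : Type*} (G : SimpleGraph V) (X : Set V) : Prop :=
  ∀ u v : V, Visible G X u v

def OuterMVSet {V : Type*} (G : SimpleGraph V) (X : Set V) : Prop :=
  MutualVisibilitySet G X ∧ ∀ u ∈ X, ∀ v ∉ X, Visible G X u v

def DualMVSet {V : Type*} (G : SimpleGraph V) (X : Set V) : Prop :=
  MutualVisibilitySet G X ∧ ∀ u ∉ X, ∀ v ∉ X, Visible G X u v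

def GeneralPositionSet {V : Type*} (G : SimpleGraph V) (X : Set V) : Prop :=
  ∀ u ∈ X, ∀ v ∈ X, Positionable G X u v

def TotalGPSet {V : Type*} (G : SimpleGraph V) (X : Set V) : Prop :=
  ∀ u v : V, Positionable G X u v

def OuterGPSet {V : Type*} (G : SimpleGraph V) (X : Set V) : Prop :=
  GeneralPositionSet G X ∧ ∀ u ∈ X, ∀ v ∉ X, Positionable G X u v

def DualGPSet {V : Type*} (G : SimpleGraph V) (X : Set V) : Prop :=
  GeneralPositionSet G X ∧ ∀ u ∉ X, ∀ v ∉ X, Positionable G X u v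

/-- The maximum cardinality of a set of vertices satisfying `P`. -/
noncomputable def maxCard {V : Type*} (P : Set V → Prop) : ℕ :=
  sSup {n : ℕ | ∃ X : Set V, P X ∧ X.ncard = n}

/-- The number of sets achieving `maxCard P`. -/
noncomputable def numMaxSets {V : Type*} (P : Set V → Prop) : ℕ :=
  {X : Set V | P X ∧ X.ncard = maxCard P}.ncard

/-- A vertex is simplicial if its neighborhood induces a complete graph. -/
def Simplicial {V : Type*} (G : SimpleGraph V) (v : V) : Prop :=
  ∀ u w : V, G.Adj v u → G.Adj v w → u ≠ w → G.Adj u w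

/-- A set of vertices is convex: every shortest path between its vertices stays inside it. -/
def ConvexSet {V : Type*} (G : SimpleGraph V) (S : Set V) : Prop :=
  ∀ u ∈ S, ∀ v ∈ S, ∀ p : G.Walk u v, IsShortest G p → ∀ w ∈ p.support, w ∈ S

/-- The Sierpiński graph `S_p^n` on vertex set `[p]_0^n`. -/
def Sierpinski (p n : ℕ) : SimpleGraph (Fin n → Fin p) where
  Adj i j := ∃ h : Fin n, (∀ t, t < h → i t = j t) ∧ i h ≠ j h ∧
      (∀ t, h < t → i t = j h ∧ j t = i h)
  symm := by
    constructor
    rintro i j ⟨h, h1, h2, h3⟩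
    exact ⟨h, fun t ht => (h1 t ht).symm, fun e => h2 e.symm,
      fun t ht => ⟨(h3 t ht).2, (h3 t ht).1⟩⟩
  loopless := by
    constructor
    rintro i ⟨h, -, h2, -⟩
    exact h2 rfl

/-- The vertex `i^n` of `S_3^n`. -/
def corner (n : ℕ) (i : Fin 3) : Fin n → Fin 3 := fun _ => i

/-- The vertex `i^{n-1}j` of `S_3^n`. -/
def almostCorner (n : ℕ) (i j : Fin 3) : Fin n → Fin 3 :=
  fun t => if (t : ℕ) = n - 1 then j else i

namespace SP
variable {m : ℕ}

/-- change the last coordinate -/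
def setLast (x : Fin (m+1) → Fin 3) (e : Fin 3) : Fin (m+1) → Fin 3 :=
  Function.update x (Fin.last m) e

def NonCorner (x : Fin (m+1) → Fin 3) : Prop := ∃ t, x t ≠ x (Fin.last m)

noncomputable def cIdx (x : Fin (m+1) → Fin 3) : Fin (m+1) :=
  if h : (Finset.univ.filter fun t => x t ≠ x (Fin.last m)).Nonempty
  then (Finset.univ.filter fun t => x t ≠ x (Fin.last m)).max' h else 0

noncomputable def lk (x : Fin (m+1) → Fin 3) : Fin (m+1) → Fin 3 :=
  fun t => if t < cIdx x then x t else if t = cIdx x then x (Fin.last m) else x (cIdx x)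

lemma cIdx_spec {x : Fin (m+1) → Fin 3} (h : NonCorner x) : x (cIdx x) ≠ x (Fin.last m) := by
  obtain ⟨t, ht⟩ := h
  have hne : (Finset.univ.filter fun t => x t ≠ x (Fin.last m)).Nonempty :=
    ⟨t, by simp [ht]⟩
  rw [cIdx, dif_pos hne]
  have := Finset.max'_mem _ hne
  simpa using this

lemma cIdx_max {x : Fin (m+1) → Fin 3} {t : Fin (m+1)} (h : cIdx x < t) :
    x t = x (Fin.last m) := by
  by_contra ht
  rw [cIdx] at h
  split_ifs at h with hne
  · exact absurd (Finset.le_max' _ t (by simp [ht])) (not_le.mpr h)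
  · exact hne ⟨t, by simp [ht]⟩

lemma cIdx_lt_last {x : Fin (m+1) → Fin 3} (h : NonCorner x) : cIdx x < Fin.last m := by
  rcases lt_or_eq_of_le (Fin.le_last (cIdx x)) with h' | h'
  · exact h'
  · exact absurd (h' ▸ rfl) (cIdx_spec h)

lemma cIdx_eq {x : Fin (m+1) → Fin 3} {h : Fin (m+1)}
    (h1 : x h ≠ x (Fin.last m)) (h2 : ∀ t, h < t → x t = x (Fin.last m)) :
    cIdx x = h := by
  have hne : (Finset.univ.filter fun t => x t ≠ x (Fin.last m)).Nonempty := ⟨h, by simp [h1]⟩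
  rw [cIdx, dif_pos hne]
  apply le_antisymm
  · apply Finset.max'_le
    intro y hy
    simp only [Finset.mem_filter] at hy
    by_contra hlt
    exact hy.2 (h2 y (not_le.mp hlt))
  · exact Finset.le_max' _ _ (by simp [h1])

lemma adj_def {x y : Fin (m+1) → Fin 3} :
    (Sierpinski 3 (m+1)).Adj x y ↔ ∃ h : Fin (m+1), (∀ t, t < h → x t = y t) ∧ x h ≠ y h ∧
      (∀ t, h < t → x t = y h ∧ y t = x h) := Iff.rfl

@[simp] lemma setLast_last {x : Fin (m+1) → Fin 3} {e : Fin 3} :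
    setLast x e (Fin.last m) = e := by simp [setLast]

lemma setLast_ne_last {x : Fin (m+1) → Fin 3} {e : Fin 3} {t : Fin (m+1)} (h : t ≠ Fin.last m) :
    setLast x e t = x t := by simp [setLast, Function.update_of_ne h]

lemma adj_iff {x y : Fin (m+1) → Fin 3} :
    (Sierpinski 3 (m+1)).Adj x y ↔
      (∃ e, e ≠ x (Fin.last m) ∧ y = setLast x e) ∨ (NonCorner x ∧ y = lk x) := by
  constructor
  · rintro ⟨h, hlt, hne, hgt⟩
    by_cases hl : h = Fin.last m
    · subst hl
      left
      refine ⟨y (Fin.last m), fun he => hne he.symm, ?_⟩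
      funext t
      by_cases ht : t = Fin.last m
      · subst ht; simp
      · rw [setLast_ne_last ht]
        exact (hlt t (lt_of_le_of_ne (Fin.le_last t) ht)).symm
    · right
      have hl' : h < Fin.last m := lt_of_le_of_ne (Fin.le_last h) hl
      have hxl : x (Fin.last m) = y h := (hgt _ hl').1
      have hnc : x h ≠ x (Fin.last m) := by rw [hxl]; exact hne
      have hc : cIdx x = h := cIdx_eq hnc (fun t ht => by rw [hxl]; exact (hgt t ht).1)
      refine ⟨⟨h, hnc⟩, ?_⟩
      funext t
      rw [lk, hc]
      rcases lt_trichotomy t h with h' | h' | h'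
      · rw [if_pos h']; exact (hlt t h').symm
      · subst h'; rw [if_neg (lt_irrefl _), if_pos rfl]; exact hxl.symm
      · rw [if_neg (not_lt.mpr h'.le), if_neg (ne_of_gt h')]
        exact (hgt t h').2
  · rintro (⟨e, he, rfl⟩ | ⟨hnc, rfl⟩)
    · refine ⟨Fin.last m, fun t ht => ?_, ?_, fun t ht => absurd ht (not_lt.mpr (Fin.le_last t))⟩
      · rw [setLast_ne_last (ne_of_lt ht)]
      · rw [setLast_last]; exact fun h => he h.symm
    · refine ⟨cIdx x, fun t ht => ?_, ?_, fun t ht => ?_⟩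
      · rw [lk, if_pos ht]
      · rw [lk, if_neg (lt_irrefl _), if_pos rfl]; exact cIdx_spec hnc
      · constructor
        · rw [lk, if_neg (lt_irrefl _), if_pos rfl]
          exact cIdx_max ht
        · rw [lk, if_neg (not_lt.mpr ht.le), if_neg (ne_of_gt ht)]


lemma adj_setLast {x : Fin (m+1) → Fin 3} {e : Fin 3} (he : e ≠ x (Fin.last m)) :
    (Sierpinski 3 (m+1)).Adj x (setLast x e) := adj_iff.mpr (Or.inl ⟨e, he, rfl⟩)

lemma adj_lk {x : Fin (m+1) → Fin 3} (h : NonCorner x) :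
    (Sierpinski 3 (m+1)).Adj x (lk x) := adj_iff.mpr (Or.inr ⟨h, rfl⟩)

lemma lk_apply_lt {x : Fin (m+1) → Fin 3} {t : Fin (m+1)} (h : t < cIdx x) : lk x t = x t := by
  rw [lk, if_pos h]

lemma lk_apply_cIdx {x : Fin (m+1) → Fin 3} : lk x (cIdx x) = x (Fin.last m) := by
  rw [lk, if_neg (lt_irrefl _), if_pos rfl]

lemma lk_apply_gt {x : Fin (m+1) → Fin 3} {t : Fin (m+1)} (h : cIdx x < t) :
    lk x t = x (cIdx x) := by
  rw [lk, if_neg (not_lt.mpr h.le), if_neg (ne_of_gt h)]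

lemma lk_last {x : Fin (m+1) → Fin 3} (h : NonCorner x) :
    lk x (Fin.last m) = x (cIdx x) := lk_apply_gt (cIdx_lt_last h)

lemma cIdx_lk {x : Fin (m+1) → Fin 3} (h : NonCorner x) : cIdx (lk x) = cIdx x := by
  apply cIdx_eq
  · rw [lk_apply_cIdx, lk_last h]
    exact fun he => cIdx_spec h he.symm
  · intro t ht
    rw [lk_apply_gt ht, lk_last h]

lemma noncorner_lk {x : Fin (m+1) → Fin 3} (h : NonCorner x) : NonCorner (lk x) := by
  refine ⟨cIdx x, ?_⟩
  rw [lk_apply_cIdx, lk_last h]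
  exact fun he => cIdx_spec h he.symm

lemma lk_lk {x : Fin (m+1) → Fin 3} (h : NonCorner x) : lk (lk x) = x := by
  funext t
  rcases lt_trichotomy t (cIdx x) with h' | h' | h'
  · rw [lk_apply_lt (by rw [cIdx_lk h]; exact h'), lk_apply_lt h']
  · subst h'; rw [← cIdx_lk h, lk_apply_cIdx, cIdx_lk h, lk_last h]
  · rw [lk_apply_gt (by rw [cIdx_lk h]; exact h'), cIdx_lk h, lk_apply_cIdx,
      cIdx_max h']

/-- agreement off the last coordinate -/
def Sib (x y : Fin (m+1) → Fin 3) : Prop := ∀ t, t ≠ Fin.last m → x t = y t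

lemma sib_last_ne {x y : Fin (m+1) → Fin 3} (h : Sib x y) (hne : x ≠ y) :
    x (Fin.last m) ≠ y (Fin.last m) := by
  intro he
  apply hne
  funext t
  by_cases ht : t = Fin.last m
  · subst ht; exact he
  · exact h t ht

lemma adj_cases {x y : Fin (m+1) → Fin 3} (h : (Sierpinski 3 (m+1)).Adj x y) :
    Sib x y ∨ (NonCorner x ∧ NonCorner y ∧ y = lk x ∧ x = lk y) := by
  rcases adj_iff.mp h with ⟨e, he, rfl⟩ | ⟨hnc, rfl⟩
  · exact Or.inl fun t ht => (setLast_ne_last ht).symm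
  · exact Or.inr ⟨hnc, noncorner_lk hnc, rfl, (lk_lk hnc).symm⟩

lemma not_sib_lk {x : Fin (m+1) → Fin 3} (h : NonCorner x) : ¬ Sib x (lk x) := by
  intro hs
  have := hs (cIdx x) (ne_of_lt (cIdx_lt_last h))
  rw [lk_apply_cIdx] at this
  exact cIdx_spec h this

lemma noC4aux {u v : Fin (m+1) → Fin 3} (hu : NonCorner u) (hv : NonCorner v)
    (hvs : ∀ t, t ≠ Fin.last m → v t = lk u t)
    (hvlast : v (Fin.last m) ≠ u (cIdx u))
    (hw2 : ∀ t, t ≠ Fin.last m → u t = lk v t) : False := by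
  have h1lt : cIdx u < Fin.last m := cIdx_lt_last hu
  have h2lt : cIdx v < Fin.last m := cIdx_lt_last hv
  rcases lt_trichotomy (cIdx u) (cIdx v) with hlt | heq | hgt
  · have h1 := hw2 (cIdx u) (ne_of_lt h1lt)
    rw [lk_apply_lt hlt] at h1
    have h2 := hvs (cIdx u) (ne_of_lt h1lt)
    rw [lk_apply_cIdx] at h2
    rw [h2] at h1
    exact cIdx_spec hu h1
  · exact hvlast (by rw [hw2 (cIdx u) (ne_of_lt h1lt), heq, lk_apply_cIdx])
  · -- cIdx v < cIdx u
    have h1 := hw2 (cIdx v) (ne_of_lt h2lt)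
    rw [lk_apply_cIdx] at h1
    have h2 := hvs (cIdx v) (ne_of_lt h2lt)
    rw [lk_apply_lt hgt] at h2
    exact cIdx_spec hv (h2.trans h1)

lemma fin3_pigeonhole : ∀ (a b c d : Fin 3), a = b ∨ a = c ∨ a = d ∨ b = c ∨ b = d ∨ c = d := by
  decide

lemma unique_common {u v w1 w2 : Fin (m+1) → Fin 3} (huv : u ≠ v)
    (hnadj : ¬ (Sierpinski 3 (m+1)).Adj u v)
    (h1 : (Sierpinski 3 (m+1)).Adj u w1) (h2 : (Sierpinski 3 (m+1)).Adj w1 v)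
    (h3 : (Sierpinski 3 (m+1)).Adj u w2) (h4 : (Sierpinski 3 (m+1)).Adj w2 v) :
    w1 = w2 := by
  by_contra hne
  have strans : ∀ {a b c : Fin (m+1) → Fin 3}, Sib a b → Sib b c → Sib a c :=
    fun hab hbc t ht => (hab t ht).trans (hbc t ht)
  have ssymm : ∀ {a b : Fin (m+1) → Fin 3}, Sib a b → Sib b a :=
    fun hab t ht => (hab t ht).symm
  rcases adj_cases h1 with s1 | ⟨ncu1, ncw1, hw1, hu1⟩ <;>
    rcases adj_cases h2 with s2 | ⟨ncw1', ncv2, hv2, hw12⟩ <;>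
    rcases adj_cases h3 with s3 | ⟨ncu3, ncw2, hw2, hu3⟩ <;>
    rcases adj_cases h4 with s4 | ⟨ncw2', ncv4, hv4, hw24⟩
  · -- all sib
    rcases fin3_pigeonhole (u (Fin.last m)) (w1 (Fin.last m)) (v (Fin.last m))
      (w2 (Fin.last m)) with h | h | h | h | h | h
    · exact sib_last_ne s1 h1.ne h
    · exact sib_last_ne (strans s1 s2) huv h
    · exact sib_last_ne s3 h3.ne h
    · exact sib_last_ne s2 h2.ne h
    · exact sib_last_ne (strans (ssymm s1) s3) hne h
    · exact sib_last_ne (ssymm s4) (Ne.symm h4.ne) h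
  · -- e4 link only : Sib u v via s1 s2; then Sib w2 v via s3 symm... contradiction: w2~v link but sib?
    exact not_sib_lk ncw2' (hv4 ▸ strans (ssymm s3) (strans s1 s2))
  · -- e3 link only
    exact not_sib_lk ncu3 (hw2 ▸ strans s1 (strans s2 (ssymm s4)))
  · -- e3,e4 link: w2 = lk u, v = lk w2 ... share w2: u = lk w2 = v?
    exact huv (hu3.trans hv4.symm)
  · -- e2 link only
    exact not_sib_lk ncw1' (hv2 ▸ strans (ssymm s1) (strans s3 s4))
  · -- e2,e4 link (share v): w1 = lk v = w2
    exact hne (hw12.trans hw24.symm)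
  · -- e2,e3 link, e1,e4 sib
    apply noC4aux ncv2 ncu3
    · intro t ht; rw [← hw12]; exact s1 t ht
    · intro hl
      apply h1.ne
      funext t
      by_cases ht : t = Fin.last m
      · subst ht; rw [hl, ← lk_last ncv2]; exact (congrFun hw12 _).symm
      · exact s1 t ht
    · intro t ht; rw [← hw2]; exact (s4 t ht).symm
  · -- e2,e3,e4 link: e3,e4 share w2
    exact huv (hu3.trans hv4.symm)
  · -- e1 link only
    exact not_sib_lk ncu1 (hw1 ▸ strans s3 (strans s4 (ssymm s2)))
  · -- e1,e4 link, e2,e3 sib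
    apply noC4aux ncu1 ncv4
    · intro t ht; rw [← hw1]; exact (s2 t ht).symm
    · intro hl
      apply h2.ne
      funext t
      by_cases ht : t = Fin.last m
      · subst ht; rw [hl, ← lk_last ncu1]; exact congrFun hw1 _
      · exact s2 t ht
    · intro t ht; rw [← hw24]; exact s3 t ht
  · -- e1,e3 link (share u): w1 = lk u = w2
    exact hne (hw1.trans hw2.symm)
  · exact hne (hw1.trans hw2.symm)
  · -- e1,e2 link (share w1): u = lk w1 = v
    exact huv (hu1.trans hv2.symm)
  · exact huv (hu1.trans hv2.symm)
  · exact huv (hu1.trans hv2.symm)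
  · exact huv (hu1.trans hv2.symm)


def homCons {k : ℕ} (i : Fin 3) : Sierpinski 3 k →g Sierpinski 3 (k+1) where
  toFun x := Fin.cons i x
  map_rel' := by
    rintro x y ⟨h, hlt, hne, hgt⟩
    refine ⟨h.succ, fun t ht => ?_, by simpa using hne, fun t ht => ?_⟩
    · rcases Fin.eq_zero_or_eq_succ t with rfl | ⟨s, rfl⟩
      · simp
      · simp only [Fin.cons_succ]
        exact hlt s (by simpa using ht)
    · rcases Fin.eq_zero_or_eq_succ t with rfl | ⟨s, rfl⟩
      · exact absurd ht (by simp [Fin.succ_pos])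
      · simp only [Fin.cons_succ]
        exact hgt s (by simpa using ht)

@[simp] lemma homCons_apply {k : ℕ} (i : Fin 3) (x : Fin k → Fin 3) :
    homCons i x = Fin.cons i x := rfl

lemma sierpinski_preconnected : ∀ k, (Sierpinski 3 k).Preconnected := by
  intro k
  induction k with
  | zero =>
    intro u v
    have : u = v := funext fun t => absurd t.2 (by omega)
    exact this ▸ Reachable.refl u
  | succ k ih =>
    intro u v
    have hu : Fin.cons (u 0) (Fin.tail u) = u := Fin.cons_self_tail u
    have hv : Fin.cons (v 0) (Fin.tail v) = v := Fin.cons_self_tail v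
    by_cases huv : u 0 = v 0
    · have r0 := Reachable.map (homCons (u 0)) (ih (Fin.tail u) (Fin.tail v))
      rw [homCons_apply, homCons_apply, hu, huv, hv] at r0
      exact r0
    · have r1 := Reachable.map (homCons (u 0)) (ih (Fin.tail u) (fun _ => v 0))
      have r2 := Reachable.map (homCons (v 0)) (ih (fun _ => u 0) (Fin.tail v))
      rw [homCons_apply, homCons_apply, hu] at r1
      rw [homCons_apply, homCons_apply, hv] at r2
      have hmid : (Sierpinski 3 (k+1)).Adj (Fin.cons (u 0) (fun _ => v 0))
          (Fin.cons (v 0) (fun _ => u 0)) := by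
        refine ⟨0, fun t ht => absurd ht (by simp), by simpa using huv, fun t ht => ?_⟩
        rcases Fin.eq_zero_or_eq_succ t with rfl | ⟨s, rfl⟩
        · exact absurd ht (lt_irrefl _)
        · simp
      exact r1.trans (hmid.reachable.trans r2)

lemma exists_shortest (u v : Fin (m+1) → Fin 3) :
    ∃ p : (Sierpinski 3 (m+1)).Walk u v, IsShortest (Sierpinski 3 (m+1)) p := by
  obtain ⟨p, hp, hl⟩ := (sierpinski_preconnected (m+1) u v).exists_path_of_dist
  exact ⟨p, hp, hl⟩

lemma visible_self {X : Set (Fin (m+1) → Fin 3)} (u : Fin (m+1) → Fin 3) :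
    Visible (Sierpinski 3 (m+1)) X u u := by
  exact ⟨Walk.nil, ⟨by simp, by simp [SimpleGraph.dist_self]⟩, by simp⟩

lemma visible_of_adj {X : Set (Fin (m+1) → Fin 3)} {u v : Fin (m+1) → Fin 3}
    (h : (Sierpinski 3 (m+1)).Adj u v) : Visible (Sierpinski 3 (m+1)) X u v := by
  refine ⟨Walk.cons h Walk.nil, ⟨by simp [h.ne], ?_⟩, ?_⟩
  · simp [((Sierpinski 3 (m+1)).dist_eq_one_iff_adj).mpr h]
  · intro w hw
    simp only [Walk.support_cons, Walk.support_nil, List.mem_cons, List.mem_singleton] at hw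
    rcases hw with rfl | rfl | h'
    · exact fun _ => Or.inl rfl
    · exact fun _ => Or.inr rfl
    · exact absurd h' List.not_mem_nil

lemma not_visible_of_blocked2 {X : Set (Fin (m+1) → Fin 3)} {u v x : Fin (m+1) → Fin 3}
    (hx : x ∈ X)
    (h1 : (Sierpinski 3 (m+1)).Adj u x) (h2 : (Sierpinski 3 (m+1)).Adj x v)
    (hnadj : ¬ (Sierpinski 3 (m+1)).Adj u v) (hne : u ≠ v)
    (huniq : ∀ w, (Sierpinski 3 (m+1)).Adj u w → (Sierpinski 3 (m+1)).Adj w v → w = x) :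
    ¬ Visible (Sierpinski 3 (m+1)) X u v := by
  rintro ⟨p, ⟨hpath, hlen⟩, hsup⟩
  have hd2 : (Sierpinski 3 (m+1)).dist u v ≤ 2 := by
    have := SimpleGraph.dist_le (Walk.cons h1 (Walk.cons h2 Walk.nil))
    simpa using this
  have hple : p.length ≤ 2 := hlen ▸ hd2
  cases p with
  | nil => exact hne rfl
  | cons h q =>
    cases q with
    | nil => exact hnadj h
    | cons h' r =>
      cases r with
      | nil =>
        rename_i w
        have hwx : w = x := huniq w h h'
        have hwX : w ∈ X := by rw [hwx]; exact hx
        rcases hsup w (by simp) hwX with he | he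
        · exact h.ne he.symm
        · exact h'.ne he
      | cons h'' s => simp only [Walk.length_cons] at hple; omega

lemma not_visible_of_blocked3 {X : Set (Fin (m+1) → Fin 3)} {u v a b : Fin (m+1) → Fin 3}
    (h1 : (Sierpinski 3 (m+1)).Adj u a) (h2 : (Sierpinski 3 (m+1)).Adj a b)
    (h3 : (Sierpinski 3 (m+1)).Adj b v)
    (hnadj : ¬ (Sierpinski 3 (m+1)).Adj u v) (hne : u ≠ v)
    (hno2 : ∀ w, (Sierpinski 3 (m+1)).Adj u w → (Sierpinski 3 (m+1)).Adj w v → False)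
    (hblock : ∀ w1 w2, (Sierpinski 3 (m+1)).Adj u w1 → (Sierpinski 3 (m+1)).Adj w1 w2 →
      (Sierpinski 3 (m+1)).Adj w2 v →
      (w1 ∈ X ∧ w1 ≠ u ∧ w1 ≠ v) ∨ (w2 ∈ X ∧ w2 ≠ u ∧ w2 ≠ v)) :
    ¬ Visible (Sierpinski 3 (m+1)) X u v := by
  rintro ⟨p, ⟨hpath, hlen⟩, hsup⟩
  have hd3 : (Sierpinski 3 (m+1)).dist u v ≤ 3 := by
    have := SimpleGraph.dist_le (Walk.cons h1 (Walk.cons h2 (Walk.cons h3 Walk.nil)))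
    simpa using this
  have hple : p.length ≤ 3 := hlen ▸ hd3
  cases p with
  | nil => exact hne rfl
  | cons ha q =>
    cases q with
    | nil => exact hnadj ha
    | cons hb r =>
      cases r with
      | nil => exact hno2 _ ha hb
      | cons hc s =>
        cases s with
        | nil =>
          rename_i w1 w2
          rcases hblock w1 w2 ha hb hc with ⟨hm, hn1, hn2⟩ | ⟨hm, hn1, hn2⟩
          · rcases hsup w1 (by simp) hm with h' | h'
            · exact hn1 h'
            · exact hn2 h'
          · rcases hsup w2 (by simp) hm with h' | h'
            · exact hn1 h'
            · exact hn2 h'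
        | cons hd t => simp only [Walk.length_cons] at hple; omega

lemma exists_shorter {c : Fin (m+1) → Fin 3}
    (hsimp : ∀ y z, (Sierpinski 3 (m+1)).Adj c y → (Sierpinski 3 (m+1)).Adj c z → y ≠ z →
      (Sierpinski 3 (m+1)).Adj y z) :
    ∀ {u v : Fin (m+1) → Fin 3} (p : (Sierpinski 3 (m+1)).Walk u v),
      p.IsPath → c ∈ p.support → c ≠ u → c ≠ v →
      ∃ w : (Sierpinski 3 (m+1)).Walk u v, w.length < p.length := by
  intro u v p
  induction p with
  | nil =>
    intro _ hc hcu _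
    simp only [Walk.support_nil, List.mem_singleton] at hc
    exact absurd hc hcu
  | @cons u' y v' h q ih =>
    intro hpath hc hcu hcv
    have hcq : c ∈ q.support := by
      rcases (by simpa using hc : c = u' ∨ c ∈ q.support) with h' | h'
      · exact absurd h' hcu
      · exact h'
    by_cases hcy : c = y
    · subst hcy
      cases q with
      | nil => exact absurd rfl hcv
      | cons h' q' =>
        rename_i z
        have huz : u' ≠ z := by
          intro he
          have : u' ∈ (Walk.cons h' q').support := by
            subst he; simp
          exact ((Walk.cons_isPath_iff h (Walk.cons h' q')).mp hpath).2 this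
        exact ⟨Walk.cons (hsimp u' z h.symm h' huz) q', by simp [Walk.length_cons]⟩
    · obtain ⟨w', hw'⟩ := ih hpath.of_cons hcq hcy hcv
      exact ⟨Walk.cons h w', by simpa [Walk.length_cons] using hw'⟩

lemma corner_noncorner_false {i : Fin 3} : ¬ NonCorner (corner (m+1) i) := by
  rintro ⟨t, ht⟩
  exact ht rfl

lemma adj_corner {i : Fin 3} {z : Fin (m+1) → Fin 3}
    (h : (Sierpinski 3 (m+1)).Adj (corner (m+1) i) z) :
    ∃ e, e ≠ i ∧ z = setLast (corner (m+1) i) e := by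
  rcases adj_iff.mp h with ⟨e, he, rfl⟩ | ⟨hnc, _⟩
  · exact ⟨e, he, rfl⟩
  · exact absurd hnc corner_noncorner_false

lemma adj_setLast_setLast {x : Fin (m+1) → Fin 3} {e f : Fin 3} (hef : e ≠ f) :
    (Sierpinski 3 (m+1)).Adj (setLast x e) (setLast x f) := by
  have : setLast x f = setLast (setLast x e) f := by
    funext t
    by_cases ht : t = Fin.last m
    · subst ht; simp
    · rw [setLast_ne_last ht, setLast_ne_last ht, setLast_ne_last ht]
  rw [this]
  exact adj_iff.mpr (Or.inl ⟨f, by simpa using hef.symm, rfl⟩)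

lemma corner_simplicial {i : Fin 3} :
    ∀ y z, (Sierpinski 3 (m+1)).Adj (corner (m+1) i) y →
      (Sierpinski 3 (m+1)).Adj (corner (m+1) i) z → y ≠ z →
      (Sierpinski 3 (m+1)).Adj y z := by
  intro y z hy hz hyz
  obtain ⟨e1, he1, rfl⟩ := adj_corner hy
  obtain ⟨e2, he2, rfl⟩ := adj_corner hz
  have : e1 ≠ e2 := fun he => hyz (by rw [he])
  exact adj_setLast_setLast this

/-- a corner is internal to no shortest path -/
lemma corner_not_internal {i : Fin 3} {u v : Fin (m+1) → Fin 3}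
    {p : (Sierpinski 3 (m+1)).Walk u v} (hp : IsShortest (Sierpinski 3 (m+1)) p)
    (hc : corner (m+1) i ∈ p.support) : corner (m+1) i = u ∨ corner (m+1) i = v := by
  by_contra hcon
  push_neg at hcon
  obtain ⟨w, hw⟩ := exists_shorter corner_simplicial p hp.1 hc hcon.1 hcon.2
  have h1 := SimpleGraph.dist_le w
  have h2 := hp.2
  omega


def pen (m : ℕ) : Fin (m+1) := ⟨m-1, by omega⟩

lemma pen_ne_last (hm : 0 < m) : pen m ≠ Fin.last m := by
  simp only [pen, Fin.ne_iff_vne, Fin.val_last]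
  omega

lemma pen_lt_last (hm : 0 < m) : pen m < Fin.last m := by
  simp only [pen, Fin.lt_iff_val_lt_val, Fin.val_last]
  omega

lemma gt_pen_eq_last {t : Fin (m+1)} (h : pen m < t) : t = Fin.last m := by
  simp only [pen, Fin.lt_iff_val_lt_val] at h
  have := t.2
  simp only [Fin.ext_iff, Fin.val_last]
  omega

/-- the triangle vertex `i^m e` -/
def xx (i e : Fin 3) : Fin (m+1) → Fin 3 := setLast (corner (m+1) i) e

lemma xx_last {i e : Fin 3} : xx (m := m) i e (Fin.last m) = e := setLast_last

lemma xx_apply {i e : Fin 3} {t : Fin (m+1)} (ht : t ≠ Fin.last m) : xx i e t = i :=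
  setLast_ne_last ht

lemma xx_self {i : Fin 3} : xx (m := m) i i = corner (m+1) i := by
  funext t
  by_cases ht : t = Fin.last m
  · subst ht; simp [xx, corner]
  · rw [xx_apply ht]; rfl

lemma cIdx_xx (hm : 0 < m) {i e : Fin 3} (he : e ≠ i) : cIdx (xx (m := m) i e) = pen m := by
  apply cIdx_eq
  · rw [xx_apply (pen_ne_last hm), xx_last]
    exact fun h => he h.symm
  · intro t ht
    rw [gt_pen_eq_last ht]

lemma noncorner_xx (hm : 0 < m) {i e : Fin 3} (he : e ≠ i) : NonCorner (xx (m := m) i e) :=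
  ⟨pen m, by rw [xx_apply (pen_ne_last hm), xx_last]; exact fun h => he h.symm⟩

/-- the link neighbour `i^{m-1} e i` of the triangle vertex `i^m e` -/
def lx (i e : Fin 3) : Fin (m+1) → Fin 3 := fun t => if t = pen m then e else i

lemma lx_pen {i e : Fin 3} : lx (m := m) i e (pen m) = e := by simp [lx]

lemma lx_apply {i e : Fin 3} {t : Fin (m+1)} (ht : t ≠ pen m) : lx i e t = i := by
  simp [lx, ht]

lemma lk_xx (hm : 0 < m) {i e : Fin 3} (he : e ≠ i) : lk (xx (m := m) i e) = lx i e := by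
  funext t
  rcases lt_trichotomy t (cIdx (xx (m := m) i e)) with h | h | h
  · rw [lk_apply_lt h]
    rw [cIdx_xx hm he] at h
    rw [xx_apply (by intro he'; rw [he'] at h; exact absurd (pen_lt_last hm) (not_lt.mpr h.le)),
      lx_apply (ne_of_lt h)]
  · rw [h, lk_apply_cIdx, cIdx_xx hm he, lx_pen, xx_last]
  · rw [lk_apply_gt h, cIdx_xx hm he]
    rw [cIdx_xx hm he] at h
    rw [xx_apply (pen_ne_last hm), lx_apply (ne_of_gt h)]

lemma adj_xx_lx (hm : 0 < m) {i e : Fin 3} (he : e ≠ i) :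
    (Sierpinski 3 (m+1)).Adj (xx i e) (lx i e) := by
  rw [← lk_xx hm he]
  exact adj_iff.mpr (Or.inr ⟨noncorner_xx hm he, rfl⟩)

/-- detour vertex `i^{m-1} e f` -/
def dd (i e f : Fin 3) : Fin (m+1) → Fin 3 := setLast (lx i e) f

lemma dd_last {i e f : Fin 3} : dd (m := m) i e f (Fin.last m) = f := setLast_last

lemma dd_pen (hm : 0 < m) {i e f : Fin 3} : dd (m := m) i e f (pen m) = e := by
  rw [dd, setLast_ne_last (pen_ne_last hm), lx_pen]

lemma dd_apply (hm : 0 < m) {i e f : Fin 3} {t : Fin (m+1)} (h1 : t ≠ Fin.last m)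
    (h2 : t ≠ pen m) : dd (m := m) i e f t = i := by
  rw [dd, setLast_ne_last h1, lx_apply h2]

lemma adj_lx_dd (hm : 0 < m) {i e f : Fin 3} (hf : f ≠ i) :
    (Sierpinski 3 (m+1)).Adj (lx i e) (dd i e f) := by
  refine adj_iff.mpr (Or.inl ⟨f, ?_, rfl⟩)
  rw [lx_apply (Ne.symm (pen_ne_last hm))]
  exact hf

lemma adj_dd_dd (hm : 0 < m) {i e f : Fin 3} (hef : e ≠ f) :
    (Sierpinski 3 (m+1)).Adj (dd i e f) (dd i f e) := by
  have hc : cIdx (dd (m := m) i e f) = pen m := by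
    apply cIdx_eq
    · rw [dd_pen hm, dd_last]; exact hef
    · intro t ht; rw [gt_pen_eq_last ht]
  have hnc : NonCorner (dd (m := m) i e f) := ⟨pen m, by rw [dd_pen hm, dd_last]; exact hef⟩
  have hlk : lk (dd (m := m) i e f) = dd i f e := by
    funext t
    rcases lt_trichotomy t (cIdx (dd (m := m) i e f)) with h | h | h
    · rw [lk_apply_lt h]
      rw [hc] at h
      have h1 : t ≠ Fin.last m := by
        intro he'; rw [he'] at h; exact absurd (pen_lt_last hm) (not_lt.mpr h.le)
      rw [dd_apply hm h1 (ne_of_lt h), dd_apply hm h1 (ne_of_lt h)]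
    · rw [h, lk_apply_cIdx, hc, dd_last, dd_pen hm]
    · rw [lk_apply_gt h, hc]
      rw [hc] at h
      rw [dd_pen hm, gt_pen_eq_last h, dd_last]
  rw [← hlk]
  exact adj_iff.mpr (Or.inr ⟨hnc, rfl⟩)

lemma dd_eq_setLast_lx {i e f : Fin 3} : dd (m := m) i f e = setLast (lx i f) e := rfl

lemma adj_dd_lx (hm : 0 < m) {i e f : Fin 3} (he : e ≠ i) :
    (Sierpinski 3 (m+1)).Adj (dd i f e) (lx i f) := by
  have : lx (m := m) i f = setLast (dd i f e) i := by
    funext t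
    by_cases ht : t = Fin.last m
    · subst ht; rw [setLast_last, lx_apply (Ne.symm (pen_ne_last hm))]
    · rw [setLast_ne_last ht]
      by_cases ht2 : t = pen m
      · subst ht2; rw [dd_pen hm, lx_pen]
      · rw [dd_apply hm ht ht2, lx_apply ht2]
  rw [this]
  refine adj_iff.mpr (Or.inl ⟨i, ?_, rfl⟩)
  rw [dd_last]
  exact Ne.symm he

/-- the corner triangle at corner i -/
def TriX (i : Fin 3) : Set (Fin (m+1) → Fin 3) := {z | ∃ e : Fin 3, z = xx i e}

lemma corner_mem_TriX {i : Fin 3} : corner (m+1) i ∈ TriX (m := m) i := ⟨i, xx_self.symm⟩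

lemma xx_mem_TriX {i e : Fin 3} : xx (m := m) i e ∈ TriX i := ⟨e, rfl⟩

lemma lx_notin_TriX (hm : 0 < m) {i e : Fin 3} (he : e ≠ i) :
    lx (m := m) i e ∉ TriX i := by
  rintro ⟨e', he'⟩
  have := congrFun he' (pen m)
  rw [lx_pen, xx_apply (pen_ne_last hm)] at this
  exact he this

lemma dd_notin_TriX (hm : 0 < m) {i e f : Fin 3} (he : e ≠ i) :
    dd (m := m) i e f ∉ TriX i := by
  rintro ⟨e', he'⟩
  have := congrFun he' (pen m)
  rw [dd_pen hm, xx_apply (pen_ne_last hm)] at this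
  exact he this

lemma fin3_cases : ∀ a b c d : Fin 3, a ≠ b → b ≠ c → a ≠ c → d ≠ b → d = a ∨ d = c := by
  decide

lemma fin3_third : ∀ a b : Fin 3, a ≠ b → ∃ c, c ≠ a ∧ c ≠ b := by decide

lemma adj_xx_cases (hm : 0 < m) {i e f : Fin 3} (hie : i ≠ e) (hif : i ≠ f) (hef : e ≠ f)
    {z : Fin (m+1) → Fin 3} (h : (Sierpinski 3 (m+1)).Adj (xx i e) z) :
    z = corner (m+1) i ∨ z = xx i f ∨ z = lx i e := by
  rcases adj_iff.mp h with ⟨e'', he'', rfl⟩ | ⟨hnc, rfl⟩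
  · rw [xx_last] at he''
    have : setLast (xx (m := m) i e) e'' = xx i e'' := by
      funext t
      by_cases ht : t = Fin.last m
      · subst ht; rw [setLast_last, xx_last]
      · rw [setLast_ne_last ht, xx_apply ht, xx_apply ht]
    rw [this]
    rcases fin3_cases i e f e'' hie hef hif he'' with h' | h'
    · subst h'; exact Or.inl xx_self
    · subst h'; exact Or.inr (Or.inl rfl)
  · rw [lk_xx hm (Ne.symm hie)]
    exact Or.inr (Or.inr rfl)


lemma fin3_cases' : ∀ a b c d : Fin 3, a ≠ b → b ≠ c → a ≠ c → d ≠ a → d = b ∨ d = c := by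
  decide

lemma segment_extract (hm : 0 < m) {i e f : Fin 3} (hie : i ≠ e) (hif : i ≠ f) (hef : e ≠ f)
    {a v : Fin (m+1) → Fin 3} (q : (Sierpinski 3 (m+1)).Walk a v) (ha : a = xx i e)
    (hq : q.IsPath)
    (hv1 : v ≠ corner (m+1) i) (hv2 : v ≠ xx i e) (hv3 : v ≠ xx i f)
    (hu : lx i e ∉ q.support) :
    ∃ r : (Sierpinski 3 (m+1)).Walk (lx i f) v, r.IsPath ∧ r.length + 2 ≤ q.length := by
  cases q with
  | nil => exact absurd ha hv2
  | cons h q' =>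
    rename_i b
    have hadj : (Sierpinski 3 (m+1)).Adj (xx i e) b := ha ▸ h
    have hq' : q'.IsPath := hq.of_cons
    have hanotin : a ∉ q'.support := ((Walk.cons_isPath_iff h q').mp hq).2
    have hu' : lx i e ∉ q'.support := fun hmem => hu (by rw [Walk.support_cons]; right; exact hmem)
    rcases adj_xx_cases hm hie hif hef hadj with hb | hb | hb
    · -- b = corner
      cases q' with
      | nil => exact absurd hb hv1
      | cons h2 q'' =>
        rename_i c
        have hadj2 : (Sierpinski 3 (m+1)).Adj (corner (m+1) i) c := hb ▸ h2
        have hq'' : q''.IsPath := hq'.of_cons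
        have hbnotin : b ∉ q''.support := ((Walk.cons_isPath_iff h2 q'').mp hq').2
        obtain ⟨e2, he2, hc⟩ := adj_corner hadj2
        rcases fin3_cases' i e f e2 hie hef hif he2 with he2' | he2'
        · -- c = xx i e = a : contradiction
          exfalso
          apply hanotin
          have : c = a := by rw [hc, he2', ha]; rfl
          rw [← this, Walk.support_cons]
          right
          exact Walk.start_mem_support q''
        · -- c = xx i f
          have hc' : c = xx i f := by rw [hc, he2']; rfl
          cases q'' with
          | nil => exact absurd hc' hv3
          | cons h3 q''' =>
            rename_i d
            have hadj3 : (Sierpinski 3 (m+1)).Adj (xx i f) d := hc' ▸ h3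
            have hcnotin : c ∉ q'''.support := ((Walk.cons_isPath_iff h3 q''').mp hq'').2
            rcases adj_xx_cases hm hif hie hef.symm hadj3 with hd | hd | hd
            · -- d = corner = b : contradiction with nodup
              exfalso
              apply hbnotin
              rw [Walk.support_cons]
              right
              rw [show b = d from hb.trans hd.symm]
              exact Walk.start_mem_support q'''
            · -- d = xx i e = a
              exfalso
              apply hanotin
              rw [Walk.support_cons]
              right
              rw [Walk.support_cons]
              right
              rw [show a = d from ha.trans hd.symm]
              exact Walk.start_mem_support q'''
            · refine ⟨q'''.copy hd rfl, ?_, ?_⟩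
              · rw [Walk.isPath_copy]
                exact hq''.of_cons
              · simp only [Walk.length_copy, Walk.length_cons]
                omega
    · -- b = xx i f
      cases q' with
      | nil => exact absurd hb hv3
      | cons h2 q'' =>
        rename_i c
        have hadj2 : (Sierpinski 3 (m+1)).Adj (xx i f) c := hb ▸ h2
        have hq'' : q''.IsPath := hq'.of_cons
        have hbnotin : b ∉ q''.support := ((Walk.cons_isPath_iff h2 q'').mp hq').2
        rcases adj_xx_cases hm hif hie hef.symm hadj2 with hc | hc | hc
        · -- c = corner
          cases q'' with
          | nil => exact absurd hc hv1
          | cons h3 q''' =>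
            rename_i d
            have hadj3 : (Sierpinski 3 (m+1)).Adj (corner (m+1) i) d := hc ▸ h3
            have hcnotin : c ∉ q'''.support := ((Walk.cons_isPath_iff h3 q''').mp hq'').2
            obtain ⟨e3, he3, hd⟩ := adj_corner hadj3
            rcases fin3_cases' i e f e3 hie hef hif he3 with he3' | he3'
            · -- d = xx i e = a
              exfalso
              apply hanotin
              rw [Walk.support_cons]
              right
              rw [Walk.support_cons]
              right
              rw [show a = d from by rw [hd, he3', ha]; rfl]
              exact Walk.start_mem_support q'''
            · -- d = xx i f = b
              exfalso
              apply hbnotin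
              rw [Walk.support_cons]
              right
              rw [show b = d from by rw [hd, he3', hb]; rfl]
              exact Walk.start_mem_support q'''
        · -- c = xx i e = a
          exfalso
          apply hanotin
          rw [show a = c from ha.trans hc.symm, Walk.support_cons]
          right
          exact Walk.start_mem_support q''
        · -- c = lx i f : done
          refine ⟨q''.copy hc rfl, ?_, ?_⟩
          · rw [Walk.isPath_copy]
            exact hq''
          · simp only [Walk.length_copy, Walk.length_cons]
            omega
    · -- b = lx i e : contradiction with hu
      exfalso
      apply hu
      rw [Walk.support_cons]
      right
      rw [← hb]
      exact Walk.start_mem_support q'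

lemma reroute (hm : 0 < m) (i : Fin 3) :
    ∀ (n : ℕ) {u v : Fin (m+1) → Fin 3} (p : (Sierpinski 3 (m+1)).Walk u v),
      p.length ≤ n → p.IsPath → u ∉ TriX i → v ∉ TriX i →
      ∃ w : (Sierpinski 3 (m+1)).Walk u v, w.length ≤ p.length ∧
        ∀ y ∈ w.support, y ∉ TriX i := by
  intro n
  induction n with
  | zero =>
    intro u v p hlen hp hu hv
    cases p with
    | nil => exact ⟨Walk.nil, le_refl _, by simpa using hu⟩
    | cons h q => simp only [Walk.length_cons] at hlen; omega
  | succ n ih =>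
    intro u v p hlen hp hu hv
    cases p with
    | nil => exact ⟨Walk.nil, le_refl _, by simpa using hu⟩
    | cons h q =>
      rename_i b
      have hq : q.IsPath := hp.of_cons
      have hunotin : u ∉ q.support := ((Walk.cons_isPath_iff h q).mp hp).2
      by_cases hbX : b ∈ TriX i
      · obtain ⟨e, hb⟩ := hbX
        by_cases hei : e = i
        · -- b = corner : then u is in the triangle, contradiction
          exfalso
          have : b = corner (m+1) i := by rw [hb, hei, xx_self]
          have hadj : (Sierpinski 3 (m+1)).Adj (corner (m+1) i) u := (this ▸ h).symm
          obtain ⟨e', he', hu'⟩ := adj_corner hadj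
          exact hu ⟨e', hu'⟩
        · -- b = xx i e, e ≠ i
          obtain ⟨f, hfi, hfe⟩ := fin3_third i e (fun hh => hei hh.symm)
          have hie : i ≠ e := fun hh => hei hh.symm
          have hif : i ≠ f := Ne.symm hfi
          have hef : e ≠ f := Ne.symm hfe
          have hadj : (Sierpinski 3 (m+1)).Adj (xx i e) u := (hb ▸ h).symm
          rcases adj_xx_cases hm hie hif hef hadj with hu' | hu' | hu'
          · exact absurd (hu' ▸ corner_mem_TriX) hu
          · exact absurd (hu' ▸ xx_mem_TriX) hu
          · -- u = lx i e
            obtain ⟨r, hr, hrlen⟩ := segment_extract hm hie hif hef q hb hq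
              (fun hc => hv (hc ▸ corner_mem_TriX)) (fun hc => hv (hc ▸ xx_mem_TriX))
              (fun hc => hv (hc ▸ xx_mem_TriX)) (hu' ▸ hunotin)
            have hlxf : lx i f ∉ TriX i := lx_notin_TriX hm hif.symm
            obtain ⟨w', hw'len, hw'X⟩ := ih r (by
              simp only [Walk.length_cons] at hlen; omega) hr hlxf hv
            have W0 : (Sierpinski 3 (m+1)).Walk (lx i e) v :=
              Walk.cons (adj_lx_dd hm hif.symm)
                (Walk.cons (adj_dd_dd hm hef) (Walk.cons (adj_dd_lx hm hie.symm) w'))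
            refine ⟨(Walk.cons (adj_lx_dd hm hif.symm)
                (Walk.cons (adj_dd_dd hm hef)
                  (Walk.cons (adj_dd_lx hm hie.symm) w'))).copy hu'.symm rfl, ?_, ?_⟩
            · simp only [Walk.length_copy, Walk.length_cons]
              omega
            · intro y hy
              rw [Walk.support_copy] at hy
              simp only [Walk.support_cons, List.mem_cons] at hy
              rcases hy with hy | hy | hy | hy
              · subst hy; exact lx_notin_TriX hm hie.symm
              · subst hy; exact dd_notin_TriX hm hie.symm
              · subst hy; exact dd_notin_TriX hm hif.symm
              · exact hw'X y hy
      · obtain ⟨w', hw'len, hw'X⟩ := ih q (by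
          simp only [Walk.length_cons] at hlen; omega) hq hbX hv
        refine ⟨Walk.cons h w', by simp only [Walk.length_cons]; omega, ?_⟩
        intro y hy
        simp only [Walk.support_cons, List.mem_cons] at hy
        rcases hy with hy | hy
        · subst hy; exact hu
        · exact hw'X y hy


lemma cIdx_le_pen {x : Fin (m+1) → Fin 3} (h : NonCorner x) : cIdx x ≤ pen m := by
  have := cIdx_lt_last h
  simp only [Fin.lt_iff_val_lt_val, Fin.val_last] at this
  simp only [Fin.le_iff_val_le_val, pen]
  omega

lemma xor_lemma {X : Set (Fin (m+1) → Fin 3)} (hd : DualMVSet (Sierpinski 3 (m+1)) X)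
    {x : Fin (m+1) → Fin 3} (hxX : x ∈ X) (hx : NonCorner x)
    {e : Fin 3} (he : e ≠ x (Fin.last m)) : (setLast x e ∈ X ↔ lk x ∉ X) := by
  have hHne : cIdx x ≠ Fin.last m := ne_of_lt (cIdx_lt_last hx)
  have hne : setLast x e ≠ lk x := by
    intro hh
    have := congrFun hh (cIdx x)
    rw [setLast_ne_last hHne, lk_apply_cIdx] at this
    exact cIdx_spec hx this
  have hnadj : ¬ (Sierpinski 3 (m+1)).Adj (setLast x e) (lk x) := by
    intro hadj
    rcases adj_cases hadj with hs | ⟨hnc1, hnc2, h12, h21⟩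
    · have := hs (cIdx x) hHne
      rw [setLast_ne_last hHne, lk_apply_cIdx] at this
      exact cIdx_spec hx this
    · rw [lk_lk hx] at h21
      have := congrFun h21 (Fin.last m)
      rw [setLast_last] at this
      exact he this
  have hnv : ¬ Visible (Sierpinski 3 (m+1)) X (setLast x e) (lk x) := by
    apply not_visible_of_blocked2 hxX (adj_setLast he).symm (adj_lk hx) hnadj hne
    intro w hw1 hw2
    exact unique_common hne hnadj hw1 hw2 (adj_setLast he).symm (adj_lk hx)
  constructor
  · intro hs hl
    exact hnv (hd.1 _ hs _ hl)
  · intro hl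
    by_contra hs
    exact hnv (hd.2 _ hs _ hl)

lemma no_link_pair {X : Set (Fin (m+1) → Fin 3)} (hd : DualMVSet (Sierpinski 3 (m+1)) X)
    {x : Fin (m+1) → Fin 3} (hxX : x ∈ X) (hx : NonCorner x) (hlX : lk x ∈ X) : False := by
  have hac : x (cIdx x) ≠ x (Fin.last m) := cIdx_spec hx
  have hHlt : cIdx x < Fin.last m := cIdx_lt_last hx
  have hHne : cIdx x ≠ Fin.last m := ne_of_lt hHlt
  set H := cIdx x with hH
  set a := x H with hadef
  set c := x (Fin.last m) with hcdef
  set L := lk x with hL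
  set u := setLast x a with hudef
  set v := setLast L c with hvdef
  have hLnc : NonCorner L := noncorner_lk hx
  have hLlast : L (Fin.last m) = a := lk_last hx
  have hLH : L H = c := lk_apply_cIdx
  have hLlt : ∀ t, t < H → L t = x t := fun t ht => lk_apply_lt ht
  have hLgt : ∀ t, H < t → L t = a := fun t ht => lk_apply_gt ht
  have hxgt : ∀ t, H < t → x t = c := fun t ht => cIdx_max ht
  have hu_last : u (Fin.last m) = a := setLast_last
  have hu_off : ∀ t, t ≠ Fin.last m → u t = x t := fun t ht => setLast_ne_last ht
  have hv_last : v (Fin.last m) = c := setLast_last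
  have hv_off : ∀ t, t ≠ Fin.last m → v t = L t := fun t ht => setLast_ne_last ht
  have huH : u H = a := by rw [hu_off H hHne]
  have hvH : v H = c := by rw [hv_off H hHne, hLH]
  have hbelow : ∀ t, t < H → u t = v t := fun t ht => by
    rw [hu_off t (ne_of_lt (ht.trans hHlt)), hv_off t (ne_of_lt (ht.trans hHlt)), hLlt t ht]
  have hune_v : u ≠ v := fun hh => hac (by rw [← huH, hh, hvH])
  have hxneu : x ≠ u := fun hh => hac (by rw [← hu_last, ← hh])
  have hxnev : x ≠ v := fun hh => hac (by rw [← hvH, ← hh])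
  have keyA : ∀ (_ : NonCorner u), ¬ (∀ t, t ≠ Fin.last m → lk u t = v t) := by
    intro hncu hs
    rcases lt_or_ge (cIdx u) H with hK | hK
    · have hKne : cIdx u ≠ Fin.last m := ne_of_lt (hK.trans hHlt)
      have h1 := hs (cIdx u) hKne
      rw [lk_apply_cIdx, hu_last] at h1
      have h2 := hbelow (cIdx u) hK
      apply cIdx_spec hncu
      rw [hu_last, h2, ← h1]
    · have h1 := hs H hHne
      rw [hvH] at h1
      rcases eq_or_lt_of_le hK with hK' | hK'
      · rw [hK', lk_apply_cIdx, hu_last] at h1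
        exact hac h1
      · rw [lk_apply_lt hK', huH] at h1
        exact hac h1
  have keyB : ∀ (_ : NonCorner v), ¬ (∀ t, t ≠ Fin.last m → lk v t = u t) := by
    intro hncv hs
    rcases lt_or_ge (cIdx v) H with hK | hK
    · have hKne : cIdx v ≠ Fin.last m := ne_of_lt (hK.trans hHlt)
      have h1 := hs (cIdx v) hKne
      rw [lk_apply_cIdx, hv_last] at h1
      have h2 := hbelow (cIdx v) hK
      apply cIdx_spec hncv
      rw [hv_last, ← h2, ← h1]
    · have h1 := hs H hHne
      rw [huH] at h1
      rcases eq_or_lt_of_le hK with hK' | hK'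
      · rw [hK', lk_apply_cIdx, hv_last] at h1
        exact hac h1.symm
      · rw [lk_apply_lt hK', hvH] at h1
        exact hac h1.symm
  have hnadj : ¬ (Sierpinski 3 (m+1)).Adj u v := by
    intro hadj
    rcases adj_cases hadj with hs | ⟨hncu, hncv, hveq, hueq⟩
    · exact hac (by rw [← huH, hs H hHne, hvH])
    · exact keyA hncu (fun t ht => (congrFun hveq t).symm)
  have hno2 : ∀ w, (Sierpinski 3 (m+1)).Adj u w → (Sierpinski 3 (m+1)).Adj w v → False := by
    intro w hw1 hw2
    rcases adj_cases hw1 with hs1 | ⟨hncu, hncw, hweq, hueq⟩ <;>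
      rcases adj_cases hw2 with hs2 | ⟨hncw', hncv, hveq, hweq'⟩
    · exact hac (by rw [← huH, hs1 H hHne, hs2 H hHne, hvH])
    · exact keyB hncv (fun t ht => by rw [← congrFun hweq' t, hs1 t ht])
    · exact keyA hncu (fun t ht => by rw [← congrFun hweq t, hs2 t ht])
    · exact hune_v (hueq.trans hveq.symm)
  have hblock : ∀ w1 w2, (Sierpinski 3 (m+1)).Adj u w1 → (Sierpinski 3 (m+1)).Adj w1 w2 →
      (Sierpinski 3 (m+1)).Adj w2 v →
      (w1 ∈ X ∧ w1 ≠ u ∧ w1 ≠ v) ∨ (w2 ∈ X ∧ w2 ≠ u ∧ w2 ≠ v) := by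
    intro w1 w2 hw1 h12 hw2
    rcases adj_cases hw1 with s1 | ⟨hncu, hncw1, hw1eq, hueq⟩ <;>
      rcases adj_cases hw2 with s2 | ⟨hncw2, hncv, hveq, hw2eq⟩
    · -- s1 : Sib u w1, s2 : Sib w2 v
      rcases adj_cases h12 with s12 | ⟨hncw1, hncw2, e12, e21⟩
      · exact absurd (by rw [← huH, s1 H hHne, s12 H hHne, s2 H hHne, hvH]) hac
      · rcases lt_trichotomy (cIdx w1) H with hK | hK | hK
        · exfalso
          have hKne : cIdx w1 ≠ Fin.last m := ne_of_lt (hK.trans hHlt)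
          have e1 : w2 (cIdx w1) = w1 (Fin.last m) := by
            rw [congrFun e12 (cIdx w1), lk_apply_cIdx]
          apply cIdx_spec hncw1
          rw [← (s1 (cIdx w1) hKne), hbelow (cIdx w1) hK, ← (s2 (cIdx w1) hKne), e1]
        · -- cIdx w1 = H : w1 = x
          left
          have hw1x : w1 = x := by
            have hcw2 : cIdx w2 = H := by rw [e12, cIdx_lk hncw1, hK]
            funext t
            rcases lt_trichotomy t H with ht | ht | ht
            · rw [← (s1 t (ne_of_lt (ht.trans hHlt))), hu_off t (ne_of_lt (ht.trans hHlt))]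
            · rw [ht, ← s1 H hHne, huH]
            · rw [hxgt t ht, congrFun e21 t,
                lk_apply_gt (show cIdx w2 < t by rw [hcw2]; exact ht), hcw2, s2 H hHne, hvH]
          rw [hw1x]
          exact ⟨hxX, hxneu, hxnev⟩
        · exfalso
          apply hac
          rw [← huH, s1 H hHne, ← lk_apply_lt (show H < cIdx w1 from hK), ← congrFun e12 H,
            s2 H hHne, hvH]
    · -- s1 : Sib u w1, link w2 v
      rcases adj_cases h12 with s12 | ⟨hncw1, hncw2', e12, e21⟩
      · exfalso
        exact keyB hncv (fun t ht => by
          rw [← congrFun hw2eq t, ← (s12 t ht), ← (s1 t ht)])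
      · exfalso
        have hw1v : w1 = v := by rw [e21, hw2eq, lk_lk hncv]
        apply hac
        rw [← huH, s1 H hHne, hw1v, hvH]
    · -- link u w1, s2 : Sib w2 v
      rcases adj_cases h12 with s12 | ⟨hncw1', hncw2, e12, e21⟩
      · exfalso
        exact keyA hncu (fun t ht => by
          rw [← congrFun hw1eq t, s12 t ht, s2 t ht])
      · exfalso
        have hw2u : w2 = u := by rw [e12, hw1eq, lk_lk hncu]
        apply hac
        rw [← huH, ← hw2u, s2 H hHne, hvH]
    · -- link u w1, link w2 v : w1 = lk u, w2 = lk v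
      exfalso
      rcases adj_cases h12 with s12 | ⟨hncw1', hncw2', e12, e21⟩
      · have hs : ∀ t, t ≠ Fin.last m → lk u t = lk v t := fun t ht => by
          rw [← hw1eq, ← hw2eq]; exact s12 t ht
        have hK'lt : cIdx u < Fin.last m := cIdx_lt_last hncu
        have hK''lt : cIdx v < Fin.last m := cIdx_lt_last hncv
        rcases lt_trichotomy (cIdx u) (cIdx v) with hKK | hKK | hKK
        · have hi : u (cIdx u) = c := by
            have := hs (cIdx v) (ne_of_lt hK''lt)
            rw [lk_apply_gt hKK, lk_apply_cIdx, hv_last] at this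
            exact this
          have hii : v (cIdx u) = a := by
            have := hs (cIdx u) (ne_of_lt hK'lt)
            rw [lk_apply_cIdx, hu_last, lk_apply_lt hKK] at this
            exact this.symm
          rcases lt_trichotomy (cIdx u) H with ht | ht | ht
          · apply hac
            rw [← hii, ← hbelow (cIdx u) ht, hi]
          · apply hac
            rw [← hi, ht, huH]
          · apply hac
            have hpgt : cIdx u < pen m := lt_of_lt_of_le hKK (cIdx_le_pen hncv)
            have hpH : H < pen m := ht.trans hpgt
            have hm0 : 0 < m := by
              have := hpH
              simp only [Fin.lt_iff_val_lt_val, pen] at this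
              omega
            have h1 : u (pen m) = c := by
              rw [hu_off (pen m) (pen_ne_last hm0), hxgt (pen m) hpH]
            have h2 : u (pen m) = a := by rw [cIdx_max hpgt, hu_last]
            rw [← h2, h1]
        · apply hac
          have h1 := hs (cIdx u) (ne_of_lt hK'lt)
          rw [lk_apply_cIdx, hu_last, hKK, lk_apply_cIdx, hv_last] at h1
          exact h1
        · -- cIdx v < cIdx u
          have hi : v (cIdx v) = a := by
            have := hs (cIdx u) (ne_of_lt hK'lt)
            rw [lk_apply_cIdx, hu_last, lk_apply_gt hKK] at this
            exact this.symm
          have hii : u (cIdx v) = c := by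
            have := hs (cIdx v) (ne_of_lt hK''lt)
            rw [lk_apply_lt hKK, lk_apply_cIdx, hv_last] at this
            exact this
          rcases lt_trichotomy (cIdx v) H with ht | ht | ht
          · apply hac
            rw [← hii, hbelow (cIdx v) ht, hi]
          · apply hac
            rw [← hi, ht, hvH]
          · apply hac
            have hpgt : cIdx v < pen m := lt_of_lt_of_le hKK (cIdx_le_pen hncu)
            have hpH : H < pen m := ht.trans hpgt
            have hm0 : 0 < m := by
              have := hpH
              simp only [Fin.lt_iff_val_lt_val, pen] at this
              omega
            have h1 : v (pen m) = a := by
              rw [hv_off (pen m) (pen_ne_last hm0), hLgt (pen m) hpH]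
            have h2 : v (pen m) = c := by rw [cIdx_max hpgt, hv_last]
            rw [← h1, h2]
      · -- link between lk u and lk v
        have : lk u = v := by
          rw [← hw1eq, e21, hw2eq, lk_lk hncv]
        exact keyA hncu (fun t _ => congrFun this t)
  have h1 : (Sierpinski 3 (m+1)).Adj u x := (adj_setLast hac).symm
  have h2 : (Sierpinski 3 (m+1)).Adj x L := adj_lk hx
  have h3 : (Sierpinski 3 (m+1)).Adj L v := adj_setLast (by rw [hLlast]; exact hac.symm)
  have hnv := not_visible_of_blocked3 h1 h2 h3 hnadj hune_v hno2 hblock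
  have huX : u ∉ X := fun huX => (xor_lemma hd hxX hx hac).mp huX hlX
  have hvX : v ∉ X := fun hvX =>
    (xor_lemma hd hlX hLnc (by rw [hLlast]; exact hac.symm)).mp hvX
      (by rw [hL, lk_lk hx]; exact hxX)
  exact hnv (hd.2 u huX v hvX)


lemma setLast_setLast {x : Fin (m+1) → Fin 3} {e f : Fin 3} :
    setLast (setLast x e) f = setLast x f := by
  funext t
  by_cases ht : t = Fin.last m
  · subst ht; simp
  · rw [setLast_ne_last ht, setLast_ne_last ht, setLast_ne_last ht]

lemma fin3_exists_ne : ∀ g : Fin 3, ∃ t, t ≠ g := by decide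

/-- a non-corner triangle fully inside a dual MV set is impossible -/
lemma no_noncorner_triangle {X : Set (Fin (m+1) → Fin 3)}
    (hd : DualMVSet (Sierpinski 3 (m+1)) X) {x : Fin (m+1) → Fin 3}
    (hX : ∀ g : Fin 3, setLast x g ∈ X)
    (hpre : ∃ t, t ≠ Fin.last m ∧ x t ≠ x (pen m)) : False := by
  obtain ⟨t0, ht0, ht0'⟩ := hpre
  have hm0 : 0 < m := by
    by_contra hm
    have : m = 0 := by omega
    subst this
    exact ht0 (by have := t0.2; simp only [Fin.ext_iff, Fin.val_last]; omega)
  have hpne : pen m ≠ Fin.last m := pen_ne_last hm0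
  set b := x (pen m) with hbdef
  set z := setLast x b with hzdef
  have hz_last : z (Fin.last m) = b := setLast_last
  have hz_off : ∀ t, t ≠ Fin.last m → z t = x t := fun t ht => setLast_ne_last ht
  have hz_pen : z (pen m) = b := by rw [hz_off _ hpne]
  have hzX : z ∈ X := hX b
  have hncz : NonCorner z := ⟨t0, by rw [hz_off _ ht0, hz_last]; exact ht0'⟩
  set H := cIdx z with hHdef
  have hHlast : H < Fin.last m := cIdx_lt_last hncz
  have hHne : H ≠ Fin.last m := ne_of_lt hHlast
  have hane : z H ≠ b := by rw [← hz_last]; exact cIdx_spec hncz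
  have hHnepen : H ≠ pen m := fun hh => hane (by rw [hh, hz_pen])
  have hHpen : H < pen m := lt_of_le_of_ne (cIdx_le_pen hncz) hHnepen
  set a := z H with hadef
  have hxH : x H = a := (hz_off H hHne).symm
  set Lb := lk z with hLbdef
  have hLbH : Lb H = b := by rw [hLbdef, lk_apply_cIdx, hz_last]
  have hLblt : ∀ t, t < H → Lb t = z t := fun t ht => lk_apply_lt ht
  have hLbgt : ∀ t, H < t → Lb t = a := fun t ht => lk_apply_gt ht
  have hLbpen : Lb (pen m) = a := hLbgt _ hHpen
  have hncLb : NonCorner Lb := noncorner_lk hncz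
  obtain ⟨tb, htb⟩ := fin3_exists_ne b
  set vt := setLast x tb with hvtdef
  have hvt_last : vt (Fin.last m) = tb := setLast_last
  have hvt_off : ∀ t, t ≠ Fin.last m → vt t = x t := fun t ht => setLast_ne_last ht
  have hvt_pen : vt (pen m) = b := by rw [hvt_off _ hpne]
  have hvt_H : vt H = a := by rw [hvt_off _ hHne, hxH]
  have hvtX : vt ∈ X := hX tb
  have hncvt : NonCorner vt := ⟨pen m, by rw [hvt_pen, hvt_last]; exact Ne.symm htb⟩
  have hcvt : cIdx vt = pen m := by
    apply cIdx_eq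
    · rw [hvt_pen, hvt_last]; exact Ne.symm htb
    · intro t ht; rw [gt_pen_eq_last ht]
  set Lt := lk vt with hLtdef
  have hLtH : Lt H = a := by
    rw [hLtdef, lk_apply_lt (by rw [hcvt]; exact hHpen), hvt_H]
  have hLtpen : Lt (pen m) = tb := by
    rw [hLtdef, ← hcvt, lk_apply_cIdx, hvt_last]
  have hncLt : NonCorner Lt := noncorner_lk hncvt
  have hzvt : setLast z tb = vt := by rw [hzdef, setLast_setLast]
  have hsvtb : setLast vt b = z := by rw [hvtdef, setLast_setLast]
  -- inequalities
  have hab : a ≠ b := hane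
  have hLbLt : Lb ≠ Lt := fun hh => hab (by rw [← hLtH, ← hh, hLbH])
  have hzLb : z ≠ Lb := fun hh => hab (by rw [← hz_pen, hh, hLbpen])
  have hzLt : z ≠ Lt := fun hh => htb (by rw [← hLtpen, ← hh, hz_pen])
  have hvtLb : vt ≠ Lb := fun hh => hab (by rw [← hvt_pen, hh, hLbpen])
  have hvtLt : vt ≠ Lt := fun hh => htb (by rw [← hLtpen, ← hh, hvt_pen])
  have hlkLb : lk Lb = z := by rw [hLbdef, lk_lk hncz]
  have hlkLt : lk Lt = vt := by rw [hLtdef, lk_lk hncvt]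
  have hnadj : ¬ (Sierpinski 3 (m+1)).Adj Lb Lt := by
    intro hadj
    rcases adj_cases hadj with hs | ⟨hnc1, hnc2, hLteq, hLbeq⟩
    · exact hab (by rw [← hLtH, ← hs H hHne, hLbH])
    · rw [hlkLb] at hLteq
      exact htb (by rw [← hLtpen, hLteq, hz_pen])
  have hno2 : ∀ w, (Sierpinski 3 (m+1)).Adj Lb w → (Sierpinski 3 (m+1)).Adj w Lt → False := by
    intro w hw1 hw2
    rcases adj_cases hw1 with s1 | ⟨hnc1, hncw, hweq, hbeq⟩ <;>
      rcases adj_cases hw2 with s2 | ⟨hncw', hnc2, hLteq, hweq'⟩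
    · exact hab (by rw [← hLtH, ← s2 H hHne, ← s1 H hHne, hLbH])
    · rw [hlkLt] at hweq'
      rw [hweq'] at s1
      exact hab (by rw [← hvt_H, ← s1 H hHne, hLbH])
    · rw [hlkLb] at hweq
      rw [hweq] at s2
      exact htb (by rw [← hLtpen, ← s2 (pen m) hpne, hz_pen])
    · rw [hlkLb] at hweq
      rw [hlkLt] at hweq'
      rw [hweq] at hweq'
      exact htb (by rw [← hvt_last, ← hweq', hz_last])
  have hblock : ∀ w1 w2, (Sierpinski 3 (m+1)).Adj Lb w1 → (Sierpinski 3 (m+1)).Adj w1 w2 →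
      (Sierpinski 3 (m+1)).Adj w2 Lt →
      (w1 ∈ X ∧ w1 ≠ Lb ∧ w1 ≠ Lt) ∨ (w2 ∈ X ∧ w2 ≠ Lb ∧ w2 ≠ Lt) := by
    intro w1 w2 hw1 h12 hw2
    rcases adj_cases hw1 with s1 | ⟨hnc1, hncw1, hw1eq, hLbeq⟩
    · rcases adj_cases hw2 with s2 | ⟨hncw2, hnc2, hLteq, hw2eq⟩
      · -- Sib Lb w1, Sib w2 Lt
        exfalso
        rcases adj_cases h12 with s12 | ⟨hncw1, hncw2, e12, e21⟩
        · exact hab (by rw [← hLtH, ← s2 H hHne, ← s12 H hHne, ← s1 H hHne, hLbH])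
        · have hcw2 : cIdx w2 = cIdx w1 := by rw [e12, cIdx_lk hncw1]
          rcases lt_trichotomy (cIdx w1) H with hK | hK | hK
          · have h1 : w1 H = w2 (cIdx w2) := by
              rw [congrFun e21 H, lk_apply_gt (by rw [hcw2]; exact hK)]
            have h2 : w1 (pen m) = w2 (cIdx w2) := by
              rw [congrFun e21 (pen m), lk_apply_gt (by rw [hcw2]; exact hK.trans hHpen)]
            apply hab
            rw [← hLbH, s1 H hHne, h1, ← h2, ← s1 (pen m) hpne, hLbpen]
          · have h1 : w2 (pen m) = w1 (cIdx w1) := by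
              rw [congrFun e12 (pen m), lk_apply_gt (by rw [hK]; exact hHpen)]
            apply htb
            rw [s2 (pen m) hpne, hLtpen] at h1
            rw [h1, hK, ← s1 H hHne, hLbH]
          · have h1 : w2 H = w1 H := by
              rw [congrFun e12 H, lk_apply_lt hK]
            apply hab
            rw [← hLtH, ← s2 H hHne, h1, ← s1 H hHne, hLbH]
      · -- w2 = lk Lt = vt
        right
        rw [hlkLt] at hw2eq
        rw [hw2eq]
        exact ⟨hvtX, hvtLb, hvtLt⟩
    · -- w1 = lk Lb = z
      left
      rw [hlkLb] at hw1eq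
      rw [hw1eq]
      exact ⟨hzX, hzLb, hzLt⟩
  have h1 : (Sierpinski 3 (m+1)).Adj Lb z := (adj_lk hncz).symm
  have h2 : (Sierpinski 3 (m+1)).Adj z vt := by
    rw [← hzvt]
    exact adj_setLast (by rw [hz_last]; exact htb)
  have h3 : (Sierpinski 3 (m+1)).Adj vt Lt := adj_lk hncvt
  have hnv := not_visible_of_blocked3 h1 h2 h3 hnadj hLbLt hno2 hblock
  have hLbX : Lb ∉ X := fun hLbX =>
    (xor_lemma hd hzX hncz (show tb ≠ z (Fin.last m) by rw [hz_last]; exact htb)).mp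
      (hzvt ▸ hvtX) hLbX
  have hLtX : Lt ∉ X := fun hLtX =>
    (xor_lemma hd hvtX hncvt (show b ≠ vt (Fin.last m) by rw [hvt_last]; exact fun hh => htb hh.symm)).mp
      (hsvtb ▸ hzX) hLtX
  exact hnv (hd.2 Lb hLbX Lt hLtX)


noncomputable def Dj (j : Fin 3) (x : Fin (m+1) → Fin 3) : ℕ :=
  ∑ t : Fin (m+1), if x t = j then 0 else 2^(m - (t : ℕ))

lemma sum_pow_range : ∀ r : ℕ, ∑ k ∈ Finset.range r, 2^k = 2^r - 1 := by
  intro r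
  induction r with
  | zero => simp
  | succ r ih =>
    rw [Finset.sum_range_succ, ih]
    have : 1 ≤ 2^r := Nat.one_le_two_pow
    have : 2^(r+1) = 2 * 2^r := by ring
    omega

lemma sum_Ioi_pow (H : Fin (m+1)) :
    ∑ t ∈ Finset.Ioi H, 2^(m - (t : ℕ)) = 2^(m - (H : ℕ)) - 1 := by
  rw [← sum_pow_range (m - (H : ℕ))]
  apply Finset.sum_nbij' (fun t : Fin (m+1) => m - (t : ℕ))
    (fun k => (⟨m - k, by omega⟩ : Fin (m+1)))
  · intro a ha
    simp only [Finset.mem_Ioi, Fin.lt_iff_val_lt_val] at ha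
    simp only [Finset.mem_range]
    have := a.2
    omega
  · intro b hb
    simp only [Finset.mem_range] at hb
    simp only [Finset.mem_Ioi, Fin.lt_def]
    have := H.2
    omega
  · intro a ha
    simp only [Finset.mem_Ioi, Fin.lt_iff_val_lt_val] at ha
    have := a.2
    simp only [Fin.ext_iff]
    omega
  · intro b hb
    simp only [Finset.mem_range] at hb
    show m - (m - b) = b
    omega
  · intro a _
    rfl

lemma sum_split (H : Fin (m+1)) (f : Fin (m+1) → ℕ) :
    ∑ t, f t = (∑ t ∈ Finset.Iio H, f t) + f H + ∑ t ∈ Finset.Ioi H, f t := by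
  have hd1 : Disjoint (Finset.Iio H) ({H} : Finset (Fin (m+1))) := by
    simp only [Finset.disjoint_left, Finset.mem_Iio, Finset.mem_singleton]
    intro a ha
    exact ne_of_lt ha
  have hd2 : Disjoint (Finset.Iio H ∪ {H}) (Finset.Ioi H) := by
    rw [Finset.disjoint_left]
    intro t ht ht2
    simp only [Finset.mem_union, Finset.mem_Iio, Finset.mem_singleton] at ht
    simp only [Finset.mem_Ioi] at ht2
    rcases ht with h | h
    · exact absurd (h.trans ht2) (lt_irrefl _)
    · exact absurd (h ▸ ht2) (lt_irrefl _)
  have h1 : Finset.Iio H ∪ {H} ∪ Finset.Ioi H = Finset.univ := by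
    ext t
    simp only [Finset.mem_union, Finset.mem_Iio, Finset.mem_singleton, Finset.mem_Ioi,
      Finset.mem_univ, iff_true]
    rcases lt_trichotomy t H with h | h | h
    · exact Or.inl (Or.inl h)
    · exact Or.inl (Or.inr h)
    · exact Or.inr h
  rw [← h1, Finset.sum_union hd2, Finset.sum_union hd1, Finset.sum_singleton]

lemma Dj_lip {x y : Fin (m+1) → Fin 3} {j : Fin 3} (h : (Sierpinski 3 (m+1)).Adj x y) :
    Dj j x ≤ Dj j y + 1 := by
  obtain ⟨h0, hlt, hne, hgt⟩ := h
  have hP : 1 ≤ 2^(m - (h0 : ℕ)) := Nat.one_le_two_pow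
  have hbelow : ∑ t ∈ Finset.Iio h0, (if x t = j then 0 else 2^(m - (t : ℕ)))
      = ∑ t ∈ Finset.Iio h0, (if y t = j then 0 else 2^(m - (t : ℕ))) := by
    apply Finset.sum_congr rfl
    intro t ht
    rw [hlt t (Finset.mem_Iio.mp ht)]
  have habovex : ∑ t ∈ Finset.Ioi h0, (if x t = j then 0 else 2^(m - (t : ℕ)))
      = if y h0 = j then 0 else 2^(m - (h0 : ℕ)) - 1 := by
    by_cases hc : y h0 = j
    · rw [if_pos hc]
      apply Finset.sum_eq_zero
      intro t ht
      rw [(hgt t (Finset.mem_Ioi.mp ht)).1, if_pos hc]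
    · rw [if_neg hc, ← sum_Ioi_pow h0]
      apply Finset.sum_congr rfl
      intro t ht
      rw [(hgt t (Finset.mem_Ioi.mp ht)).1, if_neg hc]
  have habovey : ∑ t ∈ Finset.Ioi h0, (if y t = j then 0 else 2^(m - (t : ℕ)))
      = if x h0 = j then 0 else 2^(m - (h0 : ℕ)) - 1 := by
    by_cases hc : x h0 = j
    · rw [if_pos hc]
      apply Finset.sum_eq_zero
      intro t ht
      rw [(hgt t (Finset.mem_Ioi.mp ht)).2, if_pos hc]
    · rw [if_neg hc, ← sum_Ioi_pow h0]
      apply Finset.sum_congr rfl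
      intro t ht
      rw [(hgt t (Finset.mem_Ioi.mp ht)).2, if_neg hc]
  rw [Dj, Dj, sum_split h0, sum_split h0, hbelow, habovex, habovey]
  by_cases hx0 : x h0 = j <;> by_cases hy0 : y h0 = j <;>
    simp only [if_pos, if_neg, hx0, hy0, if_true, if_false] <;> omega

lemma Dj_walk_le {x y : Fin (m+1) → Fin 3} {j : Fin 3} (p : (Sierpinski 3 (m+1)).Walk x y) :
    Dj j x ≤ p.length + Dj j y := by
  induction p with
  | nil => simp
  | cons h q ih =>
    have := Dj_lip (j := j) h
    simp only [Walk.length_cons]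
    omega

lemma Dj_corner {j : Fin 3} : Dj j (corner (m+1) j) = 0 := by
  apply Finset.sum_eq_zero
  intro t _
  simp [corner]

lemma Dj_full {w : Fin (m+1) → Fin 3} {j : Fin 3} (hw : ∀ t, w t ≠ j) :
    Dj j w = 2^(m+1) - 1 := by
  have h1 : Dj j w = ∑ t : Fin (m+1), 2^(m - (t : ℕ)) := by
    apply Finset.sum_congr rfl
    intro t _
    rw [if_neg (hw t)]
  rw [h1, sum_split (0 : Fin (m+1)), sum_Ioi_pow]
  have h2 : ∑ t ∈ Finset.Iio (0 : Fin (m+1)), 2^(m - (t : ℕ)) = 0 := by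
    apply Finset.sum_eq_zero
    intro t ht
    exact absurd (Finset.mem_Iio.mp ht) (by simp [Fin.lt_iff_val_lt_val])
  rw [h2]
  simp only [Fin.val_zero, Nat.sub_zero]
  have : 1 ≤ 2^m := Nat.one_le_two_pow
  have : 2^(m+1) = 2 * 2^m := by ring
  omega

lemma fin_cons_const {k : ℕ} (i : Fin 3) :
    Fin.cons i (fun _ : Fin k => i) = fun _ : Fin (k+1) => i := by
  funext t
  rcases Fin.eq_zero_or_eq_succ t with rfl | ⟨s, rfl⟩
  · simp
  · simp

lemma corner_walk : ∀ (k : ℕ) (i j : Fin 3),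
    ∃ w : (Sierpinski 3 k).Walk (fun _ => i) (fun _ => j), w.length ≤ 2^k - 1 := by
  intro k
  induction k with
  | zero =>
    intro i j
    exact ⟨Walk.nil.copy rfl (funext fun t => absurd t.2 (by omega)), by simp⟩
  | succ k ih =>
    intro i j
    by_cases hij : i = j
    · subst hij
      exact ⟨Walk.nil, by simp⟩
    · obtain ⟨w1, hw1⟩ := ih i j
      have hE : (Sierpinski 3 (k+1)).Adj (Fin.cons i (fun _ => j)) (Fin.cons j (fun _ => i)) := by
        refine ⟨0, fun t ht => absurd ht (by simp), by simpa using hij, fun t ht => ?_⟩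
        rcases Fin.eq_zero_or_eq_succ t with rfl | ⟨s, rfl⟩
        · exact absurd ht (lt_irrefl _)
        · simp
      refine ⟨((w1.map (homCons i)).copy (by rw [homCons_apply, fin_cons_const]) rfl).append
        (Walk.cons hE ((w1.map (homCons j)).copy rfl (by rw [homCons_apply, fin_cons_const]))), ?_⟩
      · simp only [Walk.length_append, Walk.length_copy, Walk.length_cons, Walk.length_copy,
          Walk.length_map, Walk.length_map]
        have : 2^(k+1) = 2 * 2^k := by ring
        have : 1 ≤ 2^k := Nat.one_le_two_pow
        erw [Walk.length_cons, Walk.length_copy, Walk.length_map]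
        omega

lemma corner_pair_blocked (hm0 : 0 < m) {i j : Fin 3} (hij : i ≠ j)
    {X : Set (Fin (m+1) → Fin 3)} (hX : xx i j ∈ X) :
    ¬ Visible (Sierpinski 3 (m+1)) X (corner (m+1) i) (corner (m+1) j) := by
  have hdle : (Sierpinski 3 (m+1)).dist (corner (m+1) i) (corner (m+1) j) ≤ 2^(m+1) - 1 := by
    obtain ⟨w, hw⟩ := corner_walk (m+1) i j
    exact le_trans (SimpleGraph.dist_le w) hw
  have main : ∀ {u v : Fin (m+1) → Fin 3} (p : (Sierpinski 3 (m+1)).Walk u v),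
      u = corner (m+1) i → v = corner (m+1) j →
      IsShortest (Sierpinski 3 (m+1)) p →
      (∀ w ∈ p.support, w ∈ X → w = u ∨ w = v) → False := by
    intro u v p hu hv hp hsup
    cases p with
    | nil =>
      apply hij
      have := hu.symm.trans hv
      exact congrFun this ⟨0, by omega⟩
    | cons h q =>
      rename_i b
      have hadj : (Sierpinski 3 (m+1)).Adj (corner (m+1) i) b := hu ▸ h
      obtain ⟨e', he', hb⟩ := adj_corner hadj
      by_cases hej : e' = j
      · -- b = xx i j ∈ X, internal
        have hbX : b ∈ X := by rw [hb, hej]; exact hX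
        have hbmem : b ∈ (Walk.cons h q).support := by
          rw [Walk.support_cons]
          right
          exact Walk.start_mem_support q
        rcases hsup b hbmem hbX with hbu | hbv
        · apply he'
          have := congrFun (hb.symm.trans (hbu.trans hu)) (Fin.last m)
          rw [setLast_last] at this
          rw [this]; rfl
        · apply hij
          have := congrFun (hb.symm.trans (hbv.trans hv)) ⟨0, by omega⟩
          rw [setLast_ne_last (by
            intro hh
            have := congrArg Fin.val hh
            simp only [Fin.val_last] at this
            omega)] at this
          have h2 : corner (m+1) i (⟨0, by omega⟩ : Fin (m+1)) = i := rfl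
          have h3 : corner (m+1) j (⟨0, by omega⟩ : Fin (m+1)) = j := rfl
          rw [h2] at this
          rw [h3] at this
          exact this
      · -- the walk is too long
        have hDb : Dj j b = 2^(m+1) - 1 := by
          apply Dj_full
          intro t
          rw [hb]
          by_cases ht : t = Fin.last m
          · subst ht; rw [setLast_last]; exact hej
          · rw [setLast_ne_last ht]
            intro hh
            exact hij (by rw [← hh]; rfl)
        have hq := Dj_walk_le (j := j) q
        have hDv : Dj j v = 0 := by rw [hv]; exact Dj_corner
        have hlen : q.length + 1 =
            (Sierpinski 3 (m+1)).dist (corner (m+1) i) (corner (m+1) j) := by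
          rw [← hu, ← hv, ← hp.2, Walk.length_cons]
        have h1 : 1 ≤ 2^(m+1) := Nat.one_le_two_pow
        omega
  rintro ⟨p, hp, hsup⟩
  exact main p rfl rfl hp hsup


lemma setLast_self {x : Fin (m+1) → Fin 3} : setLast x (x (Fin.last m)) = x := by
  funext t
  by_cases ht : t = Fin.last m
  · subst ht; simp
  · rw [setLast_ne_last ht]

lemma eq_corner_of_not_noncorner {y : Fin (m+1) → Fin 3} (h : ¬ NonCorner y) :
    y = corner (m+1) (y (Fin.last m)) := by
  funext t
  by_contra ht
  exact h ⟨t, ht⟩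

lemma total_mv_corners :
    TotalMVSet (Sierpinski 3 (m+1)) {z | ∃ i : Fin 3, z = corner (m+1) i} := by
  intro u v
  obtain ⟨p, hp⟩ := exists_shortest u v
  refine ⟨p, hp, fun w hw hwX => ?_⟩
  obtain ⟨i, rfl⟩ := hwX
  exact corner_not_internal hp hw

lemma dual_of_total {W : Type*} {G : SimpleGraph W} {X : Set W} (h : TotalMVSet G X) :
    DualMVSet G X := ⟨fun u _ v _ => h u v, fun u _ v _ => h u v⟩

lemma dual_TriX (hm0 : 0 < m) (i : Fin 3) :
    DualMVSet (Sierpinski 3 (m+1)) (TriX i) := by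
  constructor
  · rintro u ⟨e1, rfl⟩ v ⟨e2, rfl⟩
    by_cases h : e1 = e2
    · subst h; exact visible_self _
    · exact visible_of_adj (adj_setLast_setLast h)
  · intro u hu v hv
    obtain ⟨p, hp⟩ := exists_shortest u v
    obtain ⟨w, hwlen, hwX⟩ := reroute hm0 i p.length p le_rfl hp.1 hu hv
    refine ⟨w.bypass, ⟨Walk.bypass_isPath w, ?_⟩, fun y hy hyX => ?_⟩
    · have h1 : w.bypass.length ≤ w.length := Walk.length_bypass_le w
      have h2 := SimpleGraph.dist_le w.bypass
      have h3 := hp.2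
      omega
    · exact absurd hyX (hwX y (Walk.support_bypass_subset w hy))

lemma sib_lk_not_visible {X : Set (Fin (m+1) → Fin 3)}
    {x : Fin (m+1) → Fin 3} (hxX : x ∈ X) (hx : NonCorner x)
    {e : Fin 3} (he : e ≠ x (Fin.last m)) :
    ¬ Visible (Sierpinski 3 (m+1)) X (setLast x e) (lk x) := by
  have hHne : cIdx x ≠ Fin.last m := ne_of_lt (cIdx_lt_last hx)
  have hne : setLast x e ≠ lk x := by
    intro hh
    have := congrFun hh (cIdx x)
    rw [setLast_ne_last hHne, lk_apply_cIdx] at this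
    exact cIdx_spec hx this
  have hnadj : ¬ (Sierpinski 3 (m+1)).Adj (setLast x e) (lk x) := by
    intro hadj
    rcases adj_cases hadj with hs | ⟨hnc1, hnc2, h12, h21⟩
    · have := hs (cIdx x) hHne
      rw [setLast_ne_last hHne, lk_apply_cIdx] at this
      exact cIdx_spec hx this
    · rw [lk_lk hx] at h21
      have := congrFun h21 (Fin.last m)
      rw [setLast_last] at this
      exact he this
  apply not_visible_of_blocked2 hxX (adj_setLast he).symm (adj_lk hx) hnadj hne
  intro w hw1 hw2
  exact unique_common hne hnadj hw1 hw2 (adj_setLast he).symm (adj_lk hx)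

lemma total_subset_corners {X : Set (Fin (m+1) → Fin 3)}
    (ht : TotalMVSet (Sierpinski 3 (m+1)) X) {x : Fin (m+1) → Fin 3} (hxX : x ∈ X) :
    ¬ NonCorner x := by
  intro hnc
  exact sib_lk_not_visible hxX hnc (cIdx_spec hnc) (ht _ _)

lemma setLast_eq_xx {x : Fin (m+1) → Fin 3} {i g : Fin 3}
    (hpc : ∀ t, t ≠ Fin.last m → x t = i) : setLast x g = xx i g := by
  funext t
  by_cases ht : t = Fin.last m
  · subst ht; rw [setLast_last, xx_last]
  · rw [setLast_ne_last ht, xx_apply ht, hpc t ht]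

lemma triangle_of_noncorner {X : Set (Fin (m+1) → Fin 3)}
    (hd : DualMVSet (Sierpinski 3 (m+1)) X) {x : Fin (m+1) → Fin 3}
    (hxX : x ∈ X) (hnc : NonCorner x) :
    ∃ i : Fin 3, (∀ t, t ≠ Fin.last m → x t = i) ∧ (∀ g : Fin 3, xx i g ∈ X) ∧
      i ≠ x (Fin.last m) ∧ 0 < m := by
  have hm0 : 0 < m := by
    obtain ⟨t, ht⟩ := hnc
    by_contra hm
    have hm' : m = 0 := by omega
    subst hm'
    exact ht (by
      congr 1
      have := t.2
      simp only [Fin.ext_iff, Fin.val_last]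
      omega)
  have hlknX : lk x ∉ X := fun hl => no_link_pair hd hxX hnc hl
  have hsibs : ∀ g : Fin 3, setLast x g ∈ X := by
    intro g
    by_cases hg : g = x (Fin.last m)
    · rw [hg, setLast_self]; exact hxX
    · exact (xor_lemma hd hxX hnc hg).mpr hlknX
  have hpc : ∀ t, t ≠ Fin.last m → x t = x (pen m) := by
    by_contra hcon
    push_neg at hcon
    obtain ⟨t, ht, ht'⟩ := hcon
    exact no_noncorner_triangle hd hsibs ⟨t, ht, ht'⟩
  refine ⟨x (pen m), hpc, ?_, ?_, hm0⟩
  · intro g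
    rw [← setLast_eq_xx hpc]
    exact hsibs g
  · obtain ⟨t, ht⟩ := hnc
    have htne : t ≠ Fin.last m := fun hh => ht (hh ▸ rfl)
    rw [← hpc t htne]
    exact ht

lemma dual_cases {X : Set (Fin (m+1) → Fin 3)}
    (hd : DualMVSet (Sierpinski 3 (m+1)) X) :
    (∀ x ∈ X, ¬ NonCorner x) ∨ (0 < m ∧ ∃ i : Fin 3, X = TriX i) := by
  by_cases hall : ∀ x ∈ X, ¬ NonCorner x
  · exact Or.inl hall
  · push_neg at hall
    obtain ⟨x0, hx0X, hnc0⟩ := hall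
    obtain ⟨i, hpc, hTri, hine, hm0⟩ := triangle_of_noncorner hd hx0X hnc0
    refine Or.inr ⟨hm0, i, ?_⟩
    apply Set.eq_of_subset_of_subset
    · intro y hyX
      by_cases hncy : NonCorner y
      · obtain ⟨i', hpc', hTri', hine', _⟩ := triangle_of_noncorner hd hyX hncy
        have hii' : i' = i := by
          by_contra hii
          have hci' : corner (m+1) i' ∈ X := xx_self ▸ hTri' i'
          have hci : corner (m+1) i ∈ X := xx_self ▸ hTri i
          exact corner_pair_blocked hm0 (Ne.symm hii) (hTri i')
            (hd.1 _ hci _ hci')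
        have : y = xx i (y (Fin.last m)) := by
          funext t
          by_cases ht : t = Fin.last m
          · subst ht; rw [xx_last]
          · rw [xx_apply ht, hpc' t ht, hii']
        exact ⟨y (Fin.last m), this⟩
      · have hy := eq_corner_of_not_noncorner hncy
        by_cases hj : y (Fin.last m) = i
        · rw [hy, hj]
          exact corner_mem_TriX
        · exfalso
          have hci : corner (m+1) i ∈ X := xx_self ▸ hTri i
          exact corner_pair_blocked hm0 (fun hh => hj hh.symm) (hTri (y (Fin.last m)))
            (hd.1 _ hci _ (hy ▸ hyX))
    · rintro z ⟨g, rfl⟩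
      exact hTri g

lemma fin3_enum : ∀ i : Fin 3, i = 0 ∨ i = 1 ∨ i = 2 := by decide

lemma corners_eq :
    {z : Fin (m+1) → Fin 3 | ∃ i : Fin 3, z = corner (m+1) i} =
      {corner (m+1) 0, corner (m+1) 1, corner (m+1) 2} := by
  ext z
  simp only [Set.mem_setOf_eq, Set.mem_insert_iff, Set.mem_singleton_iff]
  constructor
  · rintro ⟨i, rfl⟩
    rcases fin3_enum i with rfl | rfl | rfl
    · exact Or.inl rfl
    · exact Or.inr (Or.inl rfl)
    · exact Or.inr (Or.inr rfl)
  · rintro (rfl | rfl | rfl)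
    exacts [⟨0, rfl⟩, ⟨1, rfl⟩, ⟨2, rfl⟩]

lemma corner_inj {i j : Fin 3} (h : corner (m+1) i = corner (m+1) j) : i = j :=
  congrFun h (Fin.last m)

lemma corners_ncard :
    ({corner (m+1) 0, corner (m+1) 1, corner (m+1) 2} :
      Set (Fin (m+1) → Fin 3)).ncard = 3 := by
  rw [Set.ncard_eq_three]
  exact ⟨_, _, _, fun h => by simpa using corner_inj h, fun h => by simpa using corner_inj h,
    fun h => by simpa using corner_inj h, rfl⟩

lemma xx_inj {i e f : Fin 3} (h : xx (m := m) i e = xx i f) : e = f := by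
  have := congrFun h (Fin.last m)
  rwa [xx_last, xx_last] at this

lemma TriX_eq (hm0 : 0 < m) {i j k : Fin 3} (hij : j ≠ i) (hik : k ≠ i) (hjk : j ≠ k)
    (huniv : ∀ g : Fin 3, g = i ∨ g = j ∨ g = k) :
    TriX (m := m) i = {corner (m+1) i, xx i j, xx i k} := by
  ext z
  simp only [TriX, Set.mem_setOf_eq, Set.mem_insert_iff, Set.mem_singleton_iff]
  constructor
  · rintro ⟨g, rfl⟩
    rcases huniv g with rfl | rfl | rfl
    · exact Or.inl xx_self
    · exact Or.inr (Or.inl rfl)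
    · exact Or.inr (Or.inr rfl)
  · rintro (rfl | rfl | rfl)
    exacts [⟨i, xx_self.symm⟩, ⟨j, rfl⟩, ⟨k, rfl⟩]

lemma TriX_ncard (hm0 : 0 < m) (i : Fin 3) : (TriX (m := m) i).ncard = 3 := by
  obtain ⟨j, k, hji, hki, hjk, huniv⟩ :
      ∃ j k : Fin 3, j ≠ i ∧ k ≠ i ∧ j ≠ k ∧ ∀ g : Fin 3, g = i ∨ g = j ∨ g = k := by
    rcases fin3_enum i with rfl | rfl | rfl
    · exact ⟨1, 2, by decide, by decide, by decide, by decide⟩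
    · exact ⟨0, 2, by decide, by decide, by decide, by decide⟩
    · exact ⟨0, 1, by decide, by decide, by decide, by decide⟩
  rw [TriX_eq hm0 hji hki hjk huniv, Set.ncard_eq_three]
  refine ⟨_, _, _, ?_, ?_, ?_, rfl⟩
  · intro h
    apply hji
    have := congrFun h (Fin.last m)
    rw [xx_last] at this
    rw [← this]; rfl
  · intro h
    apply hki
    have := congrFun h (Fin.last m)
    rw [xx_last] at this
    rw [← this]; rfl
  · exact fun h => hjk (xx_inj h)

lemma almostCorner_eq_xx {i j : Fin 3} : almostCorner (m+1) i j = xx (m := m) i j := by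
  funext t
  by_cases ht : t = Fin.last m
  · subst ht
    rw [xx_last, almostCorner]
    simp
  · rw [xx_apply ht, almostCorner]
    have h2 : (t : ℕ) ≠ m := by
      intro hh
      apply ht
      simp only [Fin.ext_iff, Fin.val_last]
      omega
    simp [h2]

end SP

/-- `μ_t(S_3^n) = μ_d(S_3^n) = 3`; `{0^n,1^n,2^n}` is the unique maximum total
mutual-visibility set, and the maximum dual mutual-visibility sets are exactly
`{0^n,1^n,2^n}` and the three sets `{i^n, i^{n-1}j, i^{n-1}k}` with `{i,j,k} = {0,1,2}`. -/
theorem stmt_11 (n : ℕ) (hn : 1 ≤ n) :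
    maxCard (TotalMVSet (Sierpinski 3 n)) = 3 ∧
    maxCard (DualMVSet (Sierpinski 3 n)) = 3 ∧
    {X : Set (Fin n → Fin 3) | TotalMVSet (Sierpinski 3 n) X ∧ X.ncard = 3} =
      {({corner n 0, corner n 1, corner n 2} : Set (Fin n → Fin 3))} ∧
    {X : Set (Fin n → Fin 3) | DualMVSet (Sierpinski 3 n) X ∧ X.ncard = 3} =
      insert ({corner n 0, corner n 1, corner n 2} : Set (Fin n → Fin 3))
        {X : Set (Fin n → Fin 3) | ∃ i j k : Fin 3,
          ({i, j, k} : Set (Fin 3)) = Set.univ ∧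
          X = ({corner n i, almostCorner n i j, almostCorner n i k} :
            Set (Fin n → Fin 3))} := by
  obtain ⟨m, rfl⟩ : ∃ m, n = m + 1 := ⟨n - 1, by omega⟩
  classical
  set C3 : Set (Fin (m+1) → Fin 3) :=
    {corner (m+1) 0, corner (m+1) 1, corner (m+1) 2} with hC3
  have hCtot : TotalMVSet (Sierpinski 3 (m+1)) C3 := by
    rw [hC3, ← SP.corners_eq]
    exact SP.total_mv_corners
  have hCdual : DualMVSet (Sierpinski 3 (m+1)) C3 := SP.dual_of_total hCtot
  have hCn : C3.ncard = 3 := SP.corners_ncard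
  have htotsub : ∀ X : Set (Fin (m+1) → Fin 3), TotalMVSet (Sierpinski 3 (m+1)) X → X ⊆ C3 := by
    intro X hX z hz
    have h1 := SP.total_subset_corners hX hz
    have hz' := SP.eq_corner_of_not_noncorner h1
    rw [hC3, ← SP.corners_eq]
    exact ⟨_, hz'⟩
  have hsubn : ∀ X : Set (Fin (m+1) → Fin 3), X ⊆ C3 → X.ncard ≤ 3 := by
    intro X hX
    calc X.ncard ≤ C3.ncard := Set.ncard_le_ncard hX (Set.toFinite _)
    _ = 3 := hCn
  have hdualn : ∀ X : Set (Fin (m+1) → Fin 3), DualMVSet (Sierpinski 3 (m+1)) X →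
      X.ncard ≤ 3 := by
    intro X hX
    rcases SP.dual_cases hX with h | ⟨hm0, i, rfl⟩
    · apply hsubn
      intro z hz
      rw [hC3, ← SP.corners_eq]
      exact ⟨_, SP.eq_corner_of_not_noncorner (h z hz)⟩
    · rw [SP.TriX_ncard hm0 i]
  have hmaxT : maxCard (TotalMVSet (Sierpinski 3 (m+1))) = 3 := by
    rw [maxCard]
    have hmemT : (3:ℕ) ∈ {k : ℕ | ∃ X : Set (Fin (m+1) → Fin 3),
        TotalMVSet (Sierpinski 3 (m+1)) X ∧ X.ncard = k} := ⟨C3, hCtot, hCn⟩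
    apply le_antisymm
    · apply csSup_le ⟨3, hmemT⟩
      rintro k ⟨X, hX, rfl⟩
      exact hsubn X (htotsub X hX)
    · apply le_csSup
      · refine ⟨3, ?_⟩
        rintro k ⟨X, hX, rfl⟩
        exact hsubn X (htotsub X hX)
      · exact ⟨C3, hCtot, hCn⟩
  have hmaxD : maxCard (DualMVSet (Sierpinski 3 (m+1))) = 3 := by
    rw [maxCard]
    have hmemD : (3:ℕ) ∈ {k : ℕ | ∃ X : Set (Fin (m+1) → Fin 3),
        DualMVSet (Sierpinski 3 (m+1)) X ∧ X.ncard = k} := ⟨C3, hCdual, hCn⟩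
    apply le_antisymm
    · apply csSup_le ⟨3, hmemD⟩
      rintro k ⟨X, hX, rfl⟩
      exact hdualn X hX
    · apply le_csSup
      · refine ⟨3, ?_⟩
        rintro k ⟨X, hX, rfl⟩
        exact hdualn X hX
      · exact ⟨C3, hCdual, hCn⟩
  have hfin3 : ∀ i : Fin 3, ∃ j k : Fin 3, j ≠ i ∧ k ≠ i ∧ j ≠ k ∧
      ∀ g : Fin 3, g = i ∨ g = j ∨ g = k := by
    intro i
    rcases SP.fin3_enum i with rfl | rfl | rfl
    · exact ⟨1, 2, by decide, by decide, by decide, by decide⟩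
    · exact ⟨0, 2, by decide, by decide, by decide, by decide⟩
    · exact ⟨0, 1, by decide, by decide, by decide, by decide⟩
  refine ⟨hmaxT, hmaxD, ?_, ?_⟩
  · ext X
    simp only [Set.mem_setOf_eq, Set.mem_singleton_iff]
    constructor
    · rintro ⟨hX, h3⟩
      exact Set.eq_of_subset_of_ncard_le (htotsub X hX) (by rw [hCn, h3]) (Set.toFinite _)
    · rintro rfl
      exact ⟨hCtot, hCn⟩
  · ext X
    simp only [Set.mem_setOf_eq, Set.mem_insert_iff]
    constructor
    · rintro ⟨hX, h3⟩
      rcases SP.dual_cases hX with h | ⟨hm0, i, rfl⟩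
      · left
        refine Set.eq_of_subset_of_ncard_le ?_ (by rw [hCn, h3]) (Set.toFinite _)
        intro z hz
        rw [hC3, ← SP.corners_eq]
        exact ⟨_, SP.eq_corner_of_not_noncorner (h z hz)⟩
      · right
        obtain ⟨j, k, hji, hki, hjk, huniv⟩ := hfin3 i
        refine ⟨i, j, k, ?_, ?_⟩
        · apply Set.eq_univ_of_forall
          intro g
          rcases huniv g with rfl | rfl | rfl
          · exact Set.mem_insert _ _
          · exact Set.mem_insert_of_mem _ (Set.mem_insert _ _)
          · exact Set.mem_insert_of_mem _ (Set.mem_insert_of_mem _ rfl)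
        · rw [SP.TriX_eq hm0 hji hki hjk huniv, SP.almostCorner_eq_xx, SP.almostCorner_eq_xx]
    · rintro (rfl | ⟨i, j, k, huniv, rfl⟩)
      · exact ⟨hCdual, hCn⟩
      · have hforall : ∀ g : Fin 3, g = i ∨ g = j ∨ g = k := by
          intro g
          have hg : g ∈ ({i, j, k} : Set (Fin 3)) := huniv ▸ Set.mem_univ g
          simpa using hg
        have hdist : j ≠ i ∧ k ≠ i ∧ j ≠ k := by
          revert hforall
          rcases SP.fin3_enum i with rfl | rfl | rfl <;>
            rcases SP.fin3_enum j with rfl | rfl | rfl <;>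
            rcases SP.fin3_enum k with rfl | rfl | rfl <;>
            first
              | (intro h; exact absurd (h 0) (by decide))
              | (intro h; exact absurd (h 1) (by decide))
              | (intro h; exact absurd (h 2) (by decide))
              | (intro _; exact ⟨by decide, by decide, by decide⟩)
        obtain ⟨hji, hki, hjk⟩ := hdist
        by_cases hm0 : 0 < m
        · have heq : ({corner (m+1) i, almostCorner (m+1) i j, almostCorner (m+1) i k} :
              Set (Fin (m+1) → Fin 3)) = SP.TriX i := by
            rw [SP.almostCorner_eq_xx, SP.almostCorner_eq_xx,
              SP.TriX_eq hm0 hji hki hjk hforall]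
          rw [heq]
          exact ⟨SP.dual_TriX hm0 i, SP.TriX_ncard hm0 i⟩
        · have hm0' : m = 0 := by omega
          subst hm0'
          have hac : ∀ g g' : Fin 3, almostCorner 1 g g' = corner 1 g' := by
            intro g g'
            funext t
            rw [almostCorner]
            have h0 : (t : ℕ) = 0 := by have := t.2; omega
            simp only [h0, if_pos]
            rfl
          have heq : ({corner 1 i, almostCorner 1 i j, almostCorner 1 i k} :
              Set (Fin 1 → Fin 3)) = C3 := by
            rw [hac i j, hac i k, hC3]
            ext z
            simp only [Set.mem_insert_iff, Set.mem_singleton_iff]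
            constructor
            · rintro (rfl | rfl | rfl)
              · rcases SP.fin3_enum i with rfl | rfl | rfl
                · exact Or.inl rfl
                · exact Or.inr (Or.inl rfl)
                · exact Or.inr (Or.inr rfl)
              · rcases SP.fin3_enum j with rfl | rfl | rfl
                · exact Or.inl rfl
                · exact Or.inr (Or.inl rfl)
                · exact Or.inr (Or.inr rfl)
              · rcases SP.fin3_enum k with rfl | rfl | rfl
                · exact Or.inl rfl
                · exact Or.inr (Or.inl rfl)
                · exact Or.inr (Or.inr rfl)
            · rintro (rfl | rfl | rfl)
              · rcases hforall 0 with rfl | rfl | rfl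
                · exact Or.inl rfl
                · exact Or.inr (Or.inl rfl)
                · exact Or.inr (Or.inr rfl)
              · rcases hforall 1 with rfl | rfl | rfl
                · exact Or.inl rfl
                · exact Or.inr (Or.inl rfl)
                · exact Or.inr (Or.inr rfl)
              · rcases hforall 2 with rfl | rfl | rfl
                · exact Or.inl rfl
                · exact Or.inr (Or.inl rfl)
                · exact Or.inr (Or.inr rfl)
          rw [heq]
          exact ⟨hCdual, hCn⟩
end

section
/- For n ≥ 1, the total general position number and the dual general position number of the Sierpiński graph S_3^n are both 3, and in each case {0^n, 1^n, 2^n} is the unique maximum set. -/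
open SimpleGraph

section Generic
variable {V : Type*} [DecidableEq V] {G : SimpleGraph V} {u v w : V}

lemma dist_two (h1 : G.Adj u w) (h2 : G.Adj w v) (hne : u ≠ v) (hna : ¬ G.Adj u v) :
    G.dist u v = 2 := by
  have hle : G.dist u v ≤ 2 := by
    simpa using SimpleGraph.dist_le (Walk.cons h1 (Walk.cons h2 .nil))
  have h0 : 0 < G.dist u v :=
    Reachable.pos_dist_of_ne ⟨Walk.cons h1 (Walk.cons h2 .nil)⟩ hne
  have h1' : G.dist u v ≠ 1 := fun h => hna ((dist_eq_one_iff_adj (G := G)).mp h)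
  omega

lemma shortest_two (h1 : G.Adj u w) (h2 : G.Adj w v) (hne : u ≠ v) (hna : ¬ G.Adj u v) :
    IsShortest G (Walk.cons h1 (Walk.cons h2 .nil)) := by
  constructor
  · simp [Walk.isPath_def, h1.ne, h2.ne, hne]
  · simp [dist_two h1 h2 hne hna]

lemma dist_three {a b : V} (h1 : G.Adj u a) (h2 : G.Adj a b) (h3 : G.Adj b v)
    (hne : u ≠ v) (hna : ¬ G.Adj u v) (hcom : ∀ z, G.Adj u z → G.Adj z v → False) :
    G.dist u v = 3 := by
  have hle : G.dist u v ≤ 3 := by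
    simpa using SimpleGraph.dist_le (Walk.cons h1 (Walk.cons h2 (Walk.cons h3 .nil)))
  have h0 : 0 < G.dist u v :=
    Reachable.pos_dist_of_ne ⟨Walk.cons h1 (Walk.cons h2 (Walk.cons h3 .nil))⟩ hne
  have h1' : G.dist u v ≠ 1 := fun h => hna ((dist_eq_one_iff_adj (G := G)).mp h)
  have h2' : G.dist u v ≠ 2 := by
    intro h
    obtain ⟨p, hp⟩ := Reachable.exists_walk_length_eq_dist
      (⟨Walk.cons h1 (Walk.cons h2 (Walk.cons h3 .nil))⟩ : G.Reachable u v)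
    rw [h] at hp
    cases p with
    | nil => simp at hp
    | cons hadj q =>
      cases q with
      | nil => simp at hp
      | cons hadj2 r =>
        cases r with
        | nil => exact hcom _ hadj hadj2
        | cons _ _ => simp [Walk.length_cons] at hp
  omega

lemma shortest_three {a b : V} (h1 : G.Adj u a) (h2 : G.Adj a b) (h3 : G.Adj b v)
    (hab : a ≠ b) (hub : u ≠ b) (hav : a ≠ v)
    (hne : u ≠ v) (hna : ¬ G.Adj u v) (hcom : ∀ z, G.Adj u z → G.Adj z v → False) :
    IsShortest G (Walk.cons h1 (Walk.cons h2 (Walk.cons h3 .nil))) := by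
  constructor
  · simp [Walk.isPath_def, h1.ne, h2.ne, h3.ne, hab, hub, hav, hne]
  · simp [dist_three h1 h2 h3 hne hna hcom]

/-- splitting a shortest walk at a support vertex yields shortest walks -/
lemma shortest_split {p : G.Walk u v} (hp : IsShortest G p) (hw : w ∈ p.support) :
    IsShortest G (p.takeUntil w hw) ∧ IsShortest G (p.dropUntil w hw) := by
  obtain ⟨hpath, hlen⟩ := hp
  have hspec := p.take_spec hw
  have hlen2 : (p.takeUntil w hw).length + (p.dropUntil w hw).length = p.length := by
    rw [← Walk.length_append, hspec]
  have d1 : G.dist u w ≤ (p.takeUntil w hw).length := SimpleGraph.dist_le _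
  have d2 : G.dist w v ≤ (p.dropUntil w hw).length := SimpleGraph.dist_le _
  have key1 : (p.takeUntil w hw).length ≤ G.dist u w := by
    by_contra hc
    push_neg at hc
    obtain ⟨q, hq⟩ := Reachable.exists_walk_length_eq_dist (⟨p.takeUntil w hw⟩ : G.Reachable u w)
    have : G.dist u v ≤ (q.append (p.dropUntil w hw)).length := SimpleGraph.dist_le _
    rw [Walk.length_append, hq] at this
    omega
  have key2 : (p.dropUntil w hw).length ≤ G.dist w v := by
    by_contra hc
    push_neg at hc
    obtain ⟨q, hq⟩ := Reachable.exists_walk_length_eq_dist (⟨p.dropUntil w hw⟩ : G.Reachable w v)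
    have : G.dist u v ≤ ((p.takeUntil w hw).append q).length := SimpleGraph.dist_le _
    rw [Walk.length_append, hq] at this
    omega
  exact ⟨⟨hpath.takeUntil hw, le_antisymm key1 d1⟩, ⟨hpath.dropUntil hw, le_antisymm key2 d2⟩⟩

/-- an internal vertex of a shortest path has two distinct non-adjacent neighbours -/
lemma internal_vertex {p : G.Walk u v} (hp : IsShortest G p) (hw : w ∈ p.support)
    (hwu : w ≠ u) (hwv : w ≠ v) :
    ∃ a b, G.Adj w a ∧ G.Adj w b ∧ a ≠ b ∧ ¬ G.Adj a b := by
  obtain ⟨hs1, hs2⟩ := shortest_split hp hw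
  have hspec := p.take_spec hw
  set p1 := p.takeUntil w hw with hp1
  set p2 := p.dropUntil w hw with hp2
  obtain ⟨b, hwb, p2', hp2'⟩ := Walk.exists_eq_cons_of_ne hwv p2
  obtain ⟨a, hwa, q1, hq1⟩ := Walk.exists_eq_cons_of_ne hwu p1.reverse
  refine ⟨a, b, hwa, hwb, ?_, ?_⟩
  · -- a ≠ b since p is a path
    intro hab
    have hnodup : (p1.support ++ p2.support.tail).Nodup := by
      have := hp.1.support_nodup
      rwa [← hspec, Walk.support_append] at this
    have ha1 : a ∈ p1.support := by
      have : a ∈ p1.reverse.support := by rw [hq1]; simp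
      simpa using this
    have hb2 : a ∈ p2.support.tail := by
      rw [hp2', hab]; simp [Walk.support_cons]
    exact (List.disjoint_of_nodup_append hnodup) ha1 hb2
  · -- ¬ Adj a b, else we get a shorter walk
    intro hab
    have hlen1 : q1.length + 1 = p1.length := by
      have := congrArg Walk.length hq1
      simpa [Nat.add_comm] using this.symm
    have hlen2' : p2'.length + 1 = p2.length := by
      rw [hp2']; simp
    have hlenp : p1.length + p2.length = p.length := by
      rw [← Walk.length_append, hspec]
    have hW : G.dist u v ≤ (q1.reverse.append (Walk.cons hab p2')).length :=
      SimpleGraph.dist_le _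
    rw [Walk.length_append] at hW
    simp only [Walk.length_reverse, Walk.length_cons] at hW
    have := hp.2
    omega

end Generic


section Sier
variable {n : ℕ}

lemma sier_adj {p m : ℕ} {i j : Fin m → Fin p} :
    (Sierpinski p m).Adj i j ↔ ∃ h : Fin m, (∀ t, t < h → i t = j t) ∧ i h ≠ j h ∧
      (∀ t, h < t → i t = j h ∧ j t = i h) := Iff.rfl

/-- update the last coordinate -/
def updL (v : Fin (n+1) → Fin 3) (a : Fin 3) : Fin (n+1) → Fin 3 :=
  Function.update v (Fin.last n) a

def Qp (v : Fin (n+1) → Fin 3) (k : ℕ) : Prop :=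
  v ⟨min k n, by omega⟩ ≠ v (Fin.last n)

instance {v : Fin (n+1) → Fin 3} : DecidablePred (Qp v) := fun _ => by
  unfold Qp; infer_instance

def piv (v : Fin (n+1) → Fin 3) : ℕ := Nat.findGreatest (Qp v) n

def pivF (v : Fin (n+1) → Fin 3) : Fin (n+1) :=
  ⟨piv v, by have := Nat.findGreatest_le (P := Qp v) n; simp only [piv]; omega⟩

def lnk (v : Fin (n+1) → Fin 3) : Fin (n+1) → Fin 3 := fun t =>
  if t < pivF v then v t else if t = pivF v then v (Fin.last n) else v (pivF v)

/-- non-corner -/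
def NC (v : Fin (n+1) → Fin 3) : Prop := ∃ t, v t ≠ v (Fin.last n)

lemma Qp_iff {v : Fin (n+1) → Fin 3} {k : ℕ} (hk : k ≤ n) :
    Qp v k ↔ v ⟨k, by omega⟩ ≠ v (Fin.last n) := by
  unfold Qp
  have : (⟨min k n, by omega⟩ : Fin (n+1)) = ⟨k, by omega⟩ := Fin.ext (by simp [hk])
  rw [this]

lemma piv_lt_last {v : Fin (n+1) → Fin 3} (h : NC v) :
    pivF v < Fin.last n ∧ v (pivF v) ≠ v (Fin.last n) := by
  obtain ⟨t, ht⟩ := h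
  have htl : t ≠ Fin.last n := fun he => ht (by rw [he])
  have htl' : (t : ℕ) < n := by
    have := t.isLt
    have : (t : ℕ) ≠ n := fun he => htl (Fin.ext (by simp [he]))
    omega
  have hq : Qp v t := by
    rw [Qp_iff (by omega)]
    simpa using ht
  have hspec : Qp v (piv v) := Nat.findGreatest_spec (le_of_lt htl') hq
  have hle : piv v ≤ n := Nat.findGreatest_le (P := Qp v) n
  have hpn : piv v ≠ n := by
    intro he
    rw [Qp_iff (le_of_eq he)] at hspec
    apply hspec
    congr 1
    exact Fin.ext (by simp [he])
  constructor
  · rw [Fin.lt_def]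
    have e1 : ((pivF v : Fin (n+1)) : ℕ) = piv v := rfl
    have e2 : ((Fin.last n : Fin (n+1)) : ℕ) = n := rfl
    omega
  · exact (Qp_iff (k := piv v) hle).mp hspec
lemma piv_lt_last' {v : Fin (n+1) → Fin 3} (h : NC v) : pivF v < Fin.last n :=
  (piv_lt_last h).1
lemma v_piv_ne {v : Fin (n+1) → Fin 3} (h : NC v) : v (pivF v) ≠ v (Fin.last n) :=
  (piv_lt_last h).2

lemma piv_gt (v : Fin (n+1) → Fin 3) {t : Fin (n+1)} (ht : pivF v < t) :
    v t = v (Fin.last n) := by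
  rcases eq_or_ne t (Fin.last n) with rfl | hne
  · rfl
  · have htn : (t : ℕ) < n := by
      have := t.isLt
      have : (t : ℕ) ≠ n := fun he => hne (Fin.ext (by simp [he]))
      omega
    by_contra hc
    have hq : Qp v t := by rw [Qp_iff (le_of_lt htn)]; simpa using hc
    exact Nat.findGreatest_is_greatest (Fin.mk_lt_mk.mp ht) (le_of_lt htn) hq

lemma lnk_at_piv (v : Fin (n+1) → Fin 3) : lnk v (pivF v) = v (Fin.last n) := by
  simp [lnk]
lemma lnk_lt {v : Fin (n+1) → Fin 3} {t : Fin (n+1)} (ht : t < pivF v) : lnk v t = v t := by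
  simp [lnk, ht]
lemma lnk_gt {v : Fin (n+1) → Fin 3} {t : Fin (n+1)} (ht : pivF v < t) : lnk v t = v (pivF v) := by
  simp [lnk, not_lt_of_gt ht, (ne_of_gt ht)]

lemma adj_lnk {v : Fin (n+1) → Fin 3} (h : NC v) : (Sierpinski 3 (n+1)).Adj v (lnk v) := by
  refine sier_adj.mpr ⟨pivF v, fun t ht => (lnk_lt ht).symm, ?_, fun t ht => ⟨?_, ?_⟩⟩
  · rw [lnk_at_piv]; exact v_piv_ne h
  · rw [lnk_at_piv]; exact piv_gt v ht
  · rw [lnk_gt ht]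

lemma adj_link_aux {v z : Fin (n+1) → Fin 3} {h : Fin (n+1)} (hlt : h < Fin.last n)
    (h1 : ∀ t, t < h → v t = z t) (h2 : v h ≠ z h)
    (h3 : ∀ t, h < t → v t = z h ∧ z t = v h) :
    h = pivF v ∧ z = lnk v := by
  have hvl : v (Fin.last n) = z h := (h3 (Fin.last n) hlt).1
  have hnc : NC v := ⟨h, by rw [hvl]; exact h2⟩
  have hpl := piv_lt_last hnc
  have hvn : (h : ℕ) < n := by
    have := Fin.lt_def.mp hlt
    have e2 : ((Fin.last n : Fin (n+1)) : ℕ) = n := rfl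
    omega
  have hle : (h : ℕ) ≤ piv v := by
    by_contra hc
    push_neg at hc
    have hq : Qp v h := by
      rw [Qp_iff (k := (h : ℕ)) (by omega)]
      simp only [Fin.eta]
      rw [hvl]; exact h2
    exact Nat.findGreatest_is_greatest hc (by omega) hq
  have hge : ¬ (h < pivF v) := by
    intro hc
    exact (piv_lt_last hnc).2 (by rw [(h3 (pivF v) hc).1, hvl])
  have heq : h = pivF v := by
    apply Fin.ext
    have e1 : ((pivF v : Fin (n+1)) : ℕ) = piv v := rfl
    have h1' : ¬ ((h : ℕ) < piv v) := fun hc => hge (by rw [Fin.lt_def]; omega)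
    omega
  rw [heq] at h1 h3 hvl
  refine ⟨heq, funext fun t => ?_⟩
  rcases lt_trichotomy t (pivF v) with ht | rfl | ht
  · rw [lnk_lt ht, h1 t ht]
  · rw [lnk_at_piv, ← hvl]
  · rw [lnk_gt ht, (h3 t ht).2]

lemma adj_cases {v z : Fin (n+1) → Fin 3} (hadj : (Sierpinski 3 (n+1)).Adj v z) :
    (v (Fin.last n) ≠ z (Fin.last n) ∧ ∀ t, t < Fin.last n → v t = z t) ∨
    (z = lnk v ∧ v = lnk z) := by
  obtain ⟨h, h1, h2, h3⟩ := sier_adj.mp hadj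
  rcases eq_or_ne h (Fin.last n) with rfl | hh
  · exact Or.inl ⟨h2, h1⟩
  · have hlt : h < Fin.last n := lt_of_le_of_ne (Fin.le_last h) hh
    refine Or.inr ⟨(adj_link_aux hlt h1 h2 h3).2, ?_⟩
    exact (adj_link_aux hlt (fun t ht => (h1 t ht).symm) (fun e => h2 e.symm)
      (fun t ht => ⟨(h3 t ht).2, (h3 t ht).1⟩)).2

lemma lnk_ne {v : Fin (n+1) → Fin 3} (h : NC v) : lnk v ≠ v := by
  intro he
  have := congrFun he (pivF v)
  rw [lnk_at_piv] at this
  exact v_piv_ne h this.symm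

lemma updL_last (v : Fin (n+1) → Fin 3) (a : Fin 3) : updL v a (Fin.last n) = a := by
  simp [updL]
lemma updL_lt {v : Fin (n+1) → Fin 3} {a : Fin 3} {t : Fin (n+1)} (ht : t < Fin.last n) :
    updL v a t = v t := by
  simp [updL, Function.update_of_ne (ne_of_lt ht)]
lemma updL_self (v : Fin (n+1) → Fin 3) : updL v (v (Fin.last n)) = v := by
  simp [updL]

lemma adj_updL {v : Fin (n+1) → Fin 3} {a : Fin 3} (ha : a ≠ v (Fin.last n)) :
    (Sierpinski 3 (n+1)).Adj v (updL v a) := by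
  refine sier_adj.mpr ⟨Fin.last n, fun t ht => (updL_lt ht).symm, ?_,
    fun t ht => absurd ht (not_lt_of_ge (Fin.le_last t))⟩
  rw [updL_last]; exact fun e => ha e.symm

end Sier

section Sier2
variable {n : ℕ}

lemma lnk_lnk {v : Fin (n+1) → Fin 3} (h : NC v) : lnk (lnk v) = v := by
  rcases adj_cases (adj_lnk h) with ⟨_, hag⟩ | ⟨_, hv⟩
  · exact absurd (hag (pivF v) (piv_lt_last' h)) (by rw [lnk_at_piv]; exact v_piv_ne h)
  · exact hv.symm

lemma lnk_last {v : Fin (n+1) → Fin 3} (h : NC v) :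
    lnk v (Fin.last n) = v (pivF v) := lnk_gt (piv_lt_last' h)

lemma NC_lnk {v : Fin (n+1) → Fin 3} (h : NC v) : NC (lnk v) :=
  ⟨pivF v, by rw [lnk_at_piv, lnk_last h]; exact (v_piv_ne h).symm⟩

/-- the link of `v` is distinct from and non-adjacent to every triangle neighbour of `v` -/
lemma lnk_updL_sep {v : Fin (n+1) → Fin 3} (h : NC v) {a : Fin 3}
    (ha : a ≠ v (Fin.last n)) :
    lnk v ≠ updL v a ∧ ¬ (Sierpinski 3 (n+1)).Adj (lnk v) (updL v a) := by
  have hp := piv_lt_last' h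
  have e1 : lnk v (pivF v) = v (Fin.last n) := lnk_at_piv v
  have e2 : updL v a (pivF v) = v (pivF v) := updL_lt hp
  constructor
  · intro he
    have := congrFun he (pivF v)
    rw [e1, e2] at this
    exact v_piv_ne h this.symm
  · intro hadj
    rcases adj_cases hadj with ⟨_, hag⟩ | ⟨hz, _⟩
    · have := hag (pivF v) hp
      rw [e1, e2] at this
      exact v_piv_ne h this.symm
    · rw [lnk_lnk h] at hz
      have := congrFun hz (Fin.last n)
      rw [updL_last] at this
      exact ha this

/-- two links off the same triangle: distinct, non-adjacent, no common neighbour -/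
lemma triangle_links {y1 y2 : Fin (n+1) → Fin 3}
    (hag : ∀ t, t < Fin.last n → y1 t = y2 t)
    (hne : y1 (Fin.last n) ≠ y2 (Fin.last n)) (h1 : NC y1) (h2 : NC y2) :
    lnk y1 ≠ lnk y2 ∧ ¬ (Sierpinski 3 (n+1)).Adj (lnk y1) (lnk y2) ∧
      ∀ z, (Sierpinski 3 (n+1)).Adj (lnk y1) z → (Sierpinski 3 (n+1)).Adj z (lnk y2) → False := by
  have hp1 := piv_lt_last' h1
  have hp2 := piv_lt_last' h2
  -- the two links differ at some coordinate below `last`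
  have C1 : ∃ t, t < Fin.last n ∧ lnk y1 t ≠ lnk y2 t := by
    rcases lt_trichotomy (pivF y1) (pivF y2) with hlt | heq | hgt
    · refine ⟨pivF y1, hp1, ?_⟩
      rw [lnk_at_piv, lnk_lt hlt, ← hag _ hp1]
      exact fun e => v_piv_ne h1 e.symm
    · refine ⟨pivF y1, hp1, ?_⟩
      rw [lnk_at_piv, heq, lnk_at_piv]
      exact hne
    · refine ⟨pivF y2, hp2, ?_⟩
      rw [lnk_at_piv, lnk_lt hgt, hag _ hp2]
      exact v_piv_ne h2
  have hny2 : lnk y1 ≠ y2 := by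
    intro he
    have := congrFun he (pivF y1)
    rw [lnk_at_piv, ← hag _ hp1] at this
    exact v_piv_ne h1 this.symm
  have hny1 : lnk y2 ≠ y1 := by
    intro he
    have := congrFun he (pivF y2)
    rw [lnk_at_piv, hag _ hp2] at this
    exact v_piv_ne h2 this.symm
  have hy12 : y1 ≠ y2 := fun he => hne (by rw [he])
  obtain ⟨tc, htc, htc'⟩ := C1
  refine ⟨?_, ?_, ?_⟩
  · intro he; exact htc' (by rw [he])
  · intro hadj
    rcases adj_cases hadj with ⟨_, hagr⟩ | ⟨hz, _⟩
    · exact htc' (hagr tc htc)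
    · rw [lnk_lnk h1] at hz; exact hny1 (hz ▸ rfl)
  · intro z hA hB
    rcases adj_cases hA with ⟨_, hag1⟩ | ⟨hz1, _⟩
    · rcases adj_cases hB with ⟨_, hag2⟩ | ⟨hlz, hz2⟩
      · exact htc' ((hag1 tc htc).trans (hag2 tc htc))
      · -- z = lnk (lnk y2) = y2
        rw [lnk_lnk h2] at hz2
        subst hz2
        have := hag1 (pivF y1) hp1
        rw [lnk_at_piv, ← hag _ hp1] at this
        exact v_piv_ne h1 this.symm
    · -- z = lnk (lnk y1) = y1
      rw [lnk_lnk h1] at hz1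
      subst hz1
      rcases adj_cases hB with ⟨_, hag2⟩ | ⟨_, hz2⟩
      · have := hag2 (pivF y2) hp2
        rw [lnk_at_piv, hag _ hp2] at this
        exact v_piv_ne h2 this
      · rw [lnk_lnk h2] at hz2
        exact hy12 hz2

/-- helper for the cross configuration -/
lemma cross_case12 {x : Fin (n+1) → Fin 3} (h : NC x) {a b : Fin 3}
    (ha : a ≠ x (Fin.last n)) (hb : b ≠ lnk x (Fin.last n)) {z : Fin (n+1) → Fin 3}
    (hz : ∀ t', t' < Fin.last n → updL x a t' = z t') {h2 : Fin (n+1)}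
    (h2lt : h2 < Fin.last n)
    (c1 : ∀ t', t' < h2 → updL (lnk x) b t' = z t')
    (c2 : updL (lnk x) b h2 ≠ z h2)
    (c3 : ∀ t', h2 < t' → updL (lnk x) b t' = z h2 ∧ z t' = updL (lnk x) b h2) : False := by
  have hp := piv_lt_last' h
  rw [lnk_last h] at hb
  rcases lt_trichotomy h2 (pivF x) with hlt | heq | hgt
  · apply c2
    rw [updL_lt h2lt, lnk_lt hlt, ← hz h2 h2lt, updL_lt h2lt]
  · subst heq
    have := (c3 (Fin.last n) h2lt).1
    rw [updL_last, ← hz _ hp, updL_lt hp] at this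
    exact hb this
  · have := c1 (pivF x) hgt
    rw [updL_lt hp, lnk_at_piv, ← hz _ hp, updL_lt hp] at this
    exact v_piv_ne h this.symm

/-- the cross configuration: triangle neighbours on the two sides of a link edge -/
lemma cross_sep {x : Fin (n+1) → Fin 3} (h : NC x) {a b : Fin 3}
    (ha : a ≠ x (Fin.last n)) (hb : b ≠ lnk x (Fin.last n)) :
    updL x a ≠ updL (lnk x) b ∧
    ¬ (Sierpinski 3 (n+1)).Adj (updL x a) (updL (lnk x) b) ∧
    ∀ z, (Sierpinski 3 (n+1)).Adj (updL x a) z →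
      (Sierpinski 3 (n+1)).Adj z (updL (lnk x) b) → False := by
  have hp := piv_lt_last' h
  have hncl : NC (lnk x) := NC_lnk h
  have hpl : pivF (lnk x) < Fin.last n := piv_lt_last' hncl
  have hll : lnk (lnk x) = x := lnk_lnk h
  -- coordinates at pivF x
  have eP : updL x a (pivF x) ≠ updL (lnk x) b (pivF x) := by
    rw [updL_lt hp, updL_lt hp, lnk_at_piv]
    exact v_piv_ne h
  have hts : updL x a ≠ updL (lnk x) b := fun he => eP (by rw [he])
  -- b ≠ x pivF, a ≠ x last
  refine ⟨hts, ?_, ?_⟩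
  · intro hadj
    obtain ⟨hh, c1, c2, c3⟩ := sier_adj.mp hadj
    rcases eq_or_ne hh (Fin.last n) with rfl | hhl
    · exact eP (c1 (pivF x) hp)
    · have hhlt : hh < Fin.last n := lt_of_le_of_ne (Fin.le_last hh) hhl
      rcases lt_trichotomy hh (pivF x) with hlt | heq | hgt
      · apply c2
        rw [updL_lt hhlt, updL_lt hhlt, lnk_lt hlt]
      · subst heq
        have := (c3 (Fin.last n) hhlt).1
        rw [updL_last, updL_lt hp, lnk_at_piv] at this
        exact ha this
      · exact eP (c1 (pivF x) hgt)
  · intro z hA hB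
    obtain ⟨h1, a1, a2, a3⟩ := sier_adj.mp hA
    obtain ⟨h2, b1, b2, b3⟩ := sier_adj.mp hB
    -- turn hB clauses around : they are for (z, s); we want (s, z)
    have b1' : ∀ t', t' < h2 → updL (lnk x) b t' = z t' := fun t' ht => (b1 t' ht).symm
    have b2' : updL (lnk x) b h2 ≠ z h2 := fun e => b2 e.symm
    have b3' : ∀ t', h2 < t' → updL (lnk x) b t' = z h2 ∧ z t' = updL (lnk x) b h2 :=
      fun t' ht => ⟨(b3 t' ht).2, (b3 t' ht).1⟩
    rcases eq_or_ne h1 (Fin.last n) with rfl | h1l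
    · rcases eq_or_ne h2 (Fin.last n) with rfl | h2l
      · exact eP ((a1 (pivF x) hp).trans (b1 (pivF x) hp))
      · exact cross_case12 h ha hb a1 (lt_of_le_of_ne (Fin.le_last h2) h2l) b1' b2' b3'
    · rcases eq_or_ne h2 (Fin.last n) with rfl | h2l
      · -- mirrored case: apply cross_case12 with x := lnk x
        have ha' : b ≠ lnk x (Fin.last n) := hb
        have hb' : a ≠ lnk (lnk x) (Fin.last n) := by rw [hll]; exact ha
        apply cross_case12 hncl ha' hb' (z := z) (h2 := h1)
          (fun t' ht => (b1 t' ht).symm)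
          (lt_of_le_of_ne (Fin.le_last h1) h1l)
          (by rw [hll]; exact fun t' ht => a1 t' ht)
          (by rw [hll]; exact a2)
          (by rw [hll]; exact a3)
      · -- both link witnesses : t = lnk z = s
        have h1lt : h1 < Fin.last n := lt_of_le_of_ne (Fin.le_last h1) h1l
        have h2lt : h2 < Fin.last n := lt_of_le_of_ne (Fin.le_last h2) h2l
        have e1 : updL x a = lnk z :=
          (adj_link_aux h1lt (fun t' ht => (a1 t' ht).symm) (fun e => a2 e.symm)
            (fun t' ht => ⟨(a3 t' ht).2, (a3 t' ht).1⟩)).2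
        have e2 : updL (lnk x) b = lnk z :=
          (adj_link_aux h2lt b1 b2 b3).2
        exact hts (e1.trans e2.symm)


section Main
variable {n : ℕ}

/-- the set of the three corners -/
def CSet (n : ℕ) : Set (Fin (n+1) → Fin 3) :=
  {corner (n+1) 0, corner (n+1) 1, corner (n+1) 2}

lemma not_NC_iff {v : Fin (n+1) → Fin 3} : ¬ NC v ↔ v ∈ CSet n := by
  constructor
  · intro h
    unfold NC at h
    push_neg at h
    have hv : v = corner (n+1) (v (Fin.last n)) := funext fun t => by
      rw [h t]; rfl
    have : v (Fin.last n) = 0 ∨ v (Fin.last n) = 1 ∨ v (Fin.last n) = 2 := by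
      omega
    rcases this with h0 | h1 | h2
    · rw [hv, h0]; exact Set.mem_insert _ _
    · rw [hv, h1]; exact Set.mem_insert_of_mem _ (Set.mem_insert _ _)
    · rw [hv, h2]; exact Set.mem_insert_of_mem _ (Set.mem_insert_of_mem _ rfl)
  · rintro (rfl | rfl | rfl) ⟨t, ht⟩ <;> exact ht rfl

lemma corner_adj {c : Fin 3} {z : Fin (n+1) → Fin 3}
    (h : (Sierpinski 3 (n+1)).Adj (corner (n+1) c) z) :
    ∀ t, t < Fin.last n → z t = c := by
  obtain ⟨hh, h1, h2, h3⟩ := sier_adj.mp h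
  rcases eq_or_ne hh (Fin.last n) with rfl | hne
  · exact fun t ht => ((h1 t ht).symm : z t = corner (n+1) c t)
  · exfalso
    have hlt : hh < Fin.last n := lt_of_le_of_ne (Fin.le_last hh) hne
    have := (h3 (Fin.last n) hlt).1
    exact h2 (this : corner (n+1) c hh = z hh)

lemma corner_simplicial {w a b : Fin (n+1) → Fin 3} (hw : w ∈ CSet n)
    (hwa : (Sierpinski 3 (n+1)).Adj w a) (hwb : (Sierpinski 3 (n+1)).Adj w b)
    (hab : a ≠ b) : (Sierpinski 3 (n+1)).Adj a b := by
  have : ∃ c : Fin 3, w = corner (n+1) c := by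
    rcases hw with rfl | rfl | rfl
    exacts [⟨0, rfl⟩, ⟨1, rfl⟩, ⟨2, rfl⟩]
  obtain ⟨c, rfl⟩ := this
  have ha := corner_adj hwa
  have hb := corner_adj hwb
  refine sier_adj.mpr ⟨Fin.last n, fun t ht => (ha t ht).trans (hb t ht).symm, ?_,
    fun t ht => absurd ht (not_lt_of_ge (Fin.le_last t))⟩
  intro he
  apply hab
  funext t
  rcases eq_or_ne t (Fin.last n) with rfl | hne
  · exact he
  · exact (ha t (lt_of_le_of_ne (Fin.le_last t) hne)).trans
      (hb t (lt_of_le_of_ne (Fin.le_last t) hne)).symm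

lemma pos_of_corner_subset {X : Set (Fin (n+1) → Fin 3)} (hX : X ⊆ CSet n)
    (u v : Fin (n+1) → Fin 3) : Positionable (Sierpinski 3 (n+1)) X u v := by
  intro p hp w hwsup hwX
  by_contra hc
  push_neg at hc
  obtain ⟨a, b, hwa, hwb, hab, hnadj⟩ := internal_vertex hp hwsup hc.1 hc.2
  exact hnadj (corner_simplicial (hX hwX) hwa hwb hab)

/-- a canonical element different from j -/
def oth (j : Fin 3) : Fin 3 := if j = 0 then 1 else 0

lemma oth_ne (j : Fin 3) : oth j ≠ j := by
  revert j; decide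

/-- a second canonical element different from j -/
def oth2 (j : Fin 3) : Fin 3 := if j = 2 then 1 else 2

lemma oth2_ne (j : Fin 3) : oth2 j ≠ j := by
  revert j; decide

lemma oth_ne_oth2 (j : Fin 3) : oth j ≠ oth2 j := by
  revert j; decide

lemma total_subset {X : Set (Fin (n+1) → Fin 3)}
    (hX : TotalGPSet (Sierpinski 3 (n+1)) X) : X ⊆ CSet n := by
  intro x hx
  by_contra hnc'
  have hnc : NC x := by
    by_contra h; exact hnc' (not_NC_iff.mp h)
  have ha : oth (x (Fin.last n)) ≠ x (Fin.last n) := oth_ne _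
  have sep := lnk_updL_sep hnc ha
  have W := Walk.cons ((adj_lnk hnc).symm) (Walk.cons (adj_updL ha) (Walk.nil))
  have hshort := shortest_two ((adj_lnk hnc).symm) (adj_updL ha) sep.1 sep.2
  have := hX (lnk x) (updL x (oth (x (Fin.last n))))
    (Walk.cons ((adj_lnk hnc).symm) (Walk.cons (adj_updL ha) (Walk.nil))) hshort x
    (by simp) hx
  rcases this with h | h
  · exact lnk_ne hnc h.symm
  · have := congrFun h (Fin.last n)
    rw [updL_last] at this
    exact ha this.symm

lemma dual_subset {X : Set (Fin (n+1) → Fin 3)}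
    (hX : DualGPSet (Sierpinski 3 (n+1)) X) : X ⊆ CSet n := by
  intro x hx
  by_contra hnc'
  have hnc : NC x := by
    by_contra h; exact hnc' (not_NC_iff.mp h)
  -- the XOR step
  have xor : ∀ a : Fin 3, a ≠ x (Fin.last n) → (lnk x ∈ X ↔ updL x a ∉ X) := by
    intro a ha
    have sep := lnk_updL_sep hnc ha
    have hshort := shortest_two ((adj_lnk hnc).symm) (adj_updL ha) sep.1 sep.2
    have hxl : x ≠ lnk x := (lnk_ne hnc).symm
    have hxt : x ≠ updL x a := by
      intro he
      have := congrFun he (Fin.last n)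
      rw [updL_last] at this
      exact ha this.symm
    constructor
    · intro hl ht
      rcases hX.1 (lnk x) hl (updL x a) ht _ hshort x (by simp) hx with h | h
      exacts [hxl h, hxt h]
    · intro ht
      by_contra hl
      rcases hX.2 (lnk x) hl (updL x a) ht _ hshort x (by simp) hx with h | h
      exacts [hxl h, hxt h]
  by_cases hl : lnk x ∈ X
  · -- Case B : the link is in X
    have hncl : NC (lnk x) := NC_lnk hnc
    have hxor2 : ∀ b : Fin 3, b ≠ lnk x (Fin.last n) → updL (lnk x) b ∉ X := by
      intro b hb hbX
      have sep := lnk_updL_sep hncl hb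
      have hshort := shortest_two ((adj_lnk hncl).symm) (adj_updL hb) sep.1 sep.2
      have h1 : lnk (lnk x) ∈ X := by rw [lnk_lnk hnc]; exact hx
      rcases hX.1 _ h1 _ hbX _ hshort (lnk x) (by simp) hl with h | h
      · exact (lnk_ne hncl) h.symm
      · have := congrFun h (Fin.last n)
        rw [updL_last] at this
        exact hb this.symm
    have ha : oth (x (Fin.last n)) ≠ x (Fin.last n) := oth_ne _
    have hb : oth (lnk x (Fin.last n)) ≠ lnk x (Fin.last n) := oth_ne _
    have ht : updL x (oth (x (Fin.last n))) ∉ X := (xor _ ha).mp hl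
    have hs : updL (lnk x) (oth (lnk x (Fin.last n))) ∉ X := hxor2 _ hb
    have cross := cross_sep hnc ha hb
    have sep0 := lnk_updL_sep hnc ha
    have hxs : x ≠ updL (lnk x) (oth (lnk x (Fin.last n))) := by
      intro he
      have := congrFun he (pivF x)
      rw [updL_lt (piv_lt_last' hnc), lnk_at_piv] at this
      exact v_piv_ne hnc this
    have hxt : x ≠ updL x (oth (x (Fin.last n))) := by
      intro he
      have := congrFun he (Fin.last n)
      rw [updL_last] at this
      exact ha this.symm
    have hW := shortest_three ((adj_updL ha).symm) (adj_lnk hnc) (adj_updL hb)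
      ((lnk_ne hnc).symm) sep0.1.symm hxs cross.1 cross.2.1 cross.2.2
    rcases hX.2 _ ht _ hs _ hW x (by simp) hx with h | h
    · exact hxt h
    · exact hxs h
  · -- Case A : the whole triangle is in X
    have tri : ∀ c : Fin 3, updL x c ∈ X := by
      intro c
      rcases eq_or_ne c (x (Fin.last n)) with rfl | hc
      · rw [updL_self]; exact hx
      · by_contra hcX
        exact hl ((xor c hc).mpr hcX)
    obtain ⟨t0, ht0⟩ := hnc
    have hnc : NC x := ⟨t0, ht0⟩
    have ht0l : t0 < Fin.last n :=
      lt_of_le_of_ne (Fin.le_last t0) (fun he => ht0 (by rw [he]))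
    have hc1 : oth (x t0) ≠ x t0 := oth_ne _
    have hc2 : oth2 (x t0) ≠ x t0 := oth2_ne _
    have hc12 : oth (x t0) ≠ oth2 (x t0) := oth_ne_oth2 _
    set c1 := oth (x t0)
    set c2 := oth2 (x t0)
    have hy1 : updL x c1 ∈ X := tri c1
    have hy2 : updL x c2 ∈ X := tri c2
    have hnc1 : NC (updL x c1) :=
      ⟨t0, by rw [updL_lt ht0l, updL_last]; exact fun e => hc1 e.symm⟩
    have hnc2 : NC (updL x c2) :=
      ⟨t0, by rw [updL_lt ht0l, updL_last]; exact fun e => hc2 e.symm⟩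
    have hag : ∀ t, t < Fin.last n → updL x c1 t = updL x c2 t := fun t htl => by
      rw [updL_lt htl, updL_lt htl]
    have hne12 : updL x c1 (Fin.last n) ≠ updL x c2 (Fin.last n) := by
      rw [updL_last, updL_last]; exact hc12
    have hyne : updL x c1 ≠ updL x c2 := fun he => hne12 (by rw [he])
    have hupd : updL (updL x c1) c2 = updL x c2 := by
      funext t
      rcases eq_or_ne t (Fin.last n) with rfl | htn
      · rw [updL_last, updL_last]
      · have htl : t < Fin.last n := lt_of_le_of_ne (Fin.le_last t) htn
        rw [updL_lt htl, updL_lt htl, updL_lt htl]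
    have hupd' : updL (updL x c2) c1 = updL x c1 := by
      funext t
      rcases eq_or_ne t (Fin.last n) with rfl | htn
      · rw [updL_last, updL_last]
      · have htl : t < Fin.last n := lt_of_le_of_ne (Fin.le_last t) htn
        rw [updL_lt htl, updL_lt htl, updL_lt htl]
    have hadj12 : (Sierpinski 3 (n+1)).Adj (updL x c1) (updL x c2) := by
      rw [← hupd]
      exact adj_updL (by rw [updL_last]; exact fun e => hc12 e.symm)
    have sep1 := lnk_updL_sep hnc1 (a := c2) (by rw [updL_last]; exact fun e => hc12 e.symm)
    have sep2 := lnk_updL_sep hnc2 (a := c1) (by rw [updL_last]; exact hc12)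
    rw [hupd] at sep1
    rw [hupd'] at sep2
    by_cases hl1 : lnk (updL x c1) ∈ X
    · have hshort := shortest_two ((adj_lnk hnc1).symm) hadj12 sep1.1 sep1.2
      rcases hX.1 _ hl1 _ hy2 _ hshort (updL x c1) (by simp) hy1 with h | h
      · exact (lnk_ne hnc1) h.symm
      · exact hyne h
    by_cases hl2 : lnk (updL x c2) ∈ X
    · have hshort := shortest_two ((adj_lnk hnc2).symm) hadj12.symm sep2.1 sep2.2
      rcases hX.1 _ hl2 _ hy1 _ hshort (updL x c2) (by simp) hy2 with h | h
      · exact (lnk_ne hnc2) h.symm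
      · exact hyne h.symm
    · have tl := triangle_links hag hne12 hnc1 hnc2
      have hshort := shortest_three ((adj_lnk hnc1).symm) hadj12 (adj_lnk hnc2)
        hyne sep1.1 sep2.1.symm tl.1 tl.2.1 tl.2.2
      rcases hX.2 _ hl1 _ hl2 _ hshort (updL x c1) (by simp) hy1 with h | h
      · exact (lnk_ne hnc1) h.symm
      · exact sep2.1 h.symm

end Main


lemma maxCard_spec {V' : Type*} [Fintype V'] (P : Set V' → Prop) (C : Set V')
    (hC : P C) (hC3 : C.ncard = 3) (hsub : ∀ X, P X → X ⊆ C) :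
    maxCard P = 3 ∧ {X : Set V' | P X ∧ X.ncard = 3} = {C} := by
  have hCfin : C.Finite := Set.toFinite C
  have hbound : ∀ X, P X → X.ncard ≤ 3 := fun X hX => by
    rw [← hC3]; exact Set.ncard_le_ncard (hsub X hX) hCfin
  constructor
  · unfold maxCard
    apply le_antisymm
    · refine csSup_le ⟨3, ⟨C, hC, hC3⟩⟩ ?_
      rintro k ⟨X, hX, rfl⟩
      exact hbound X hX
    · apply le_csSup
      · refine ⟨3, ?_⟩
        rintro k ⟨X, hX, rfl⟩
        exact hbound X hX
      · exact ⟨C, hC, hC3⟩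
  · ext X
    simp only [Set.mem_setOf_eq, Set.mem_singleton_iff]
    constructor
    · rintro ⟨hP, h3⟩
      exact Set.eq_of_subset_of_ncard_le (hsub X hP) (by rw [hC3, h3]) hCfin
    · rintro rfl
      exact ⟨hC, hC3⟩

lemma CSet_ncard {n : ℕ} : (CSet n).ncard = 3 := by
  have h01 : corner (n+1) 0 ≠ corner (n+1) (1 : Fin 3) := fun h => by
    have := congrFun h 0
    simp only [corner] at this
    exact absurd this (by decide)
  have h02 : corner (n+1) 0 ≠ corner (n+1) (2 : Fin 3) := fun h => by
    have := congrFun h 0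
    simp only [corner] at this
    exact absurd this (by decide)
  have h12 : corner (n+1) 1 ≠ corner (n+1) (2 : Fin 3) := fun h => by
    have := congrFun h 0
    simp only [corner] at this
    exact absurd this (by decide)
  exact Set.ncard_eq_three.mpr ⟨_, _, _, h01, h02, h12, rfl⟩


/-- `gp_t(S_3^n) = gp_d(S_3^n) = 3`, and in each case `{0^n,1^n,2^n}` is the unique
maximum set. -/
theorem stmt_12 (n : ℕ) (hn : 1 ≤ n) :
    maxCard (TotalGPSet (Sierpinski 3 n)) = 3 ∧
    maxCard (DualGPSet (Sierpinski 3 n)) = 3 ∧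
    {X : Set (Fin n → Fin 3) | TotalGPSet (Sierpinski 3 n) X ∧ X.ncard = 3} =
      {({corner n 0, corner n 1, corner n 2} : Set (Fin n → Fin 3))} ∧
    {X : Set (Fin n → Fin 3) | DualGPSet (Sierpinski 3 n) X ∧ X.ncard = 3} =
      {({corner n 0, corner n 1, corner n 2} : Set (Fin n → Fin 3))} := by
  obtain ⟨m, rfl⟩ : ∃ m, n = m + 1 := ⟨n - 1, by omega⟩
  have hCt : TotalGPSet (Sierpinski 3 (m+1)) (CSet m) :=
    fun u v => pos_of_corner_subset subset_rfl u v
  have hCd : DualGPSet (Sierpinski 3 (m+1)) (CSet m) :=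
    ⟨fun u _ v _ => hCt u v, fun u _ v _ => hCt u v⟩
  have ht := maxCard_spec (TotalGPSet (Sierpinski 3 (m+1))) (CSet m) hCt CSet_ncard
    (fun X hX => total_subset hX)
  have hd := maxCard_spec (DualGPSet (Sierpinski 3 (m+1))) (CSet m) hCd CSet_ncard
    (fun X hX => dual_subset hX)
  exact ⟨ht.1, hd.1, ht.2, hd.2⟩
end Sier2
end
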